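/- arXiv:1103.5415 — 5 statements merged into one kernel-verified Lean document; each statement's English description precedes it below -/
import Mathlib

section
/- Let β = (β_0,…,β_n), r = (r_1,…,r_n), s = (s_1,…,s_n) be nonnegative integer sequences with r_i + r_{i+1} ≤ β_i and s_i + s_{i+1} ≤ β_i for all 0 ≤ i ≤ n (conventions r_0 = r_{n+1} = s_0 = s_{n+1} = 0). Assume Σ_{i=0}^n (−1)^i β_i = ±1, that r_i + r_{i+1} = β_i for all indices 0 ≤ i ≤ n except exactly one, and that s_i + s_{i+1} = β_i for all indices except exactly one. Then the up-and-down graph Γ(β;r,s) has exactly one vertex that is not incident to a red edge and exactly one vertex that is not incident to a blue edge, every other vertex is incident to exactly one red and exactly one blue edge, and the two exceptional vertices lie in the same connected component of Γ(β;r,s); consequently exactly one connected component of Γ(β;r,s) is a string (path) and all remaining components are bands (cycles). -/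
/-- Vertices `e^(i)_j` of the up-and-down graph: pairs `(i, j)` with `0 ≤ i ≤ n`
and `1 ≤ j ≤ β i`. -/
def UDVert (n : ℕ) (β : ℕ → ℕ) : Type :=
  {p : ℕ × ℕ // p.1 ≤ n ∧ 1 ≤ p.2 ∧ p.2 ≤ β p.1}

/-- The red edges of the up-and-down graph `Γ(β; r, s)`: for `1 ≤ i ≤ n`, if `n - i`
is even they join `e^(i)_j` to `e^(i-1)_j` for `1 ≤ j ≤ r i`, and if `n - i` is odd
they join `e^(i)_{β i + 1 - j}` to `e^(i-1)_{β (i-1) + 1 - j}` for `1 ≤ j ≤ r i`. -/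
def RedAdj (n : ℕ) (β r : ℕ → ℕ) (p q : ℕ × ℕ) : Prop :=
  ∃ i j : ℕ, 1 ≤ i ∧ i ≤ n ∧ 1 ≤ j ∧ j ≤ r i ∧
    ((Even (n - i) ∧
        ((p = (i, j) ∧ q = (i - 1, j)) ∨ (q = (i, j) ∧ p = (i - 1, j)))) ∨
      (¬ Even (n - i) ∧
        ((p = (i, β i + 1 - j) ∧ q = (i - 1, β (i - 1) + 1 - j)) ∨
          (q = (i, β i + 1 - j) ∧ p = (i - 1, β (i - 1) + 1 - j)))))

/-- The blue edges of the up-and-down graph `Γ(β; r, s)`: for `1 ≤ i ≤ n`, if `n - i`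
is even they join `e^(i)_{β i + 1 - j}` to `e^(i-1)_{β (i-1) + 1 - j}` for `1 ≤ j ≤ s i`,
and if `n - i` is odd they join `e^(i)_j` to `e^(i-1)_j` for `1 ≤ j ≤ s i`. -/
def BlueAdj (n : ℕ) (β s : ℕ → ℕ) (p q : ℕ × ℕ) : Prop :=
  ∃ i j : ℕ, 1 ≤ i ∧ i ≤ n ∧ 1 ≤ j ∧ j ≤ s i ∧
    ((¬ Even (n - i) ∧
        ((p = (i, j) ∧ q = (i - 1, j)) ∨ (q = (i, j) ∧ p = (i - 1, j)))) ∨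
      (Even (n - i) ∧
        ((p = (i, β i + 1 - j) ∧ q = (i - 1, β (i - 1) + 1 - j)) ∨
          (q = (i, β i + 1 - j) ∧ p = (i - 1, β (i - 1) + 1 - j)))))

/-- The up-and-down graph `Γ(β; r, s)` (edges of both colors). -/
def UDGraph (n : ℕ) (β r s : ℕ → ℕ) : SimpleGraph (UDVert n β) where
  Adj x y := x ≠ y ∧ (RedAdj n β r x.1 y.1 ∨ BlueAdj n β s x.1 y.1)
  symm := by
    constructor
    rintro x y ⟨hxy, h⟩
    refine ⟨hxy.symm, ?_⟩
    rcases h with ⟨i, j, h1, h2, h3, h4, h5⟩ | ⟨i, j, h1, h2, h3, h4, h5⟩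
    · exact Or.inl ⟨i, j, h1, h2, h3, h4, by tauto⟩
    · exact Or.inr ⟨i, j, h1, h2, h3, h4, by tauto⟩
  loopless := by constructor; rintro x ⟨h, -⟩; exact h rfl

/-- The sequence `m` extended by the conventions `m 0 = m (n+1) = 0` (entries outside
`1,…,n` are set to `0`). -/
def bandM (n : ℕ) (m : ℕ → ℕ) : ℕ → ℕ := fun i => if 1 ≤ i ∧ i ≤ n then m i else 0

/-- The band dimension vector `[m_n, …, m_1]`, i.e. `β i = m i + m (i+1)` with the
conventions `m 0 = m (n+1) = 0`. -/
def bandBeta (n : ℕ) (m : ℕ → ℕ) : ℕ → ℕ := fun i => bandM n m i + bandM n m (i + 1)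

/-- The up-and-down graph `Γ([m_n, …, m_1])` of a band dimension vector:
`r = s = (m_1, …, m_n)`. -/
def bandGraph (n : ℕ) (m : ℕ → ℕ) : SimpleGraph (UDVert n (bandBeta n m)) :=
  UDGraph n (bandBeta n m) (bandM n m) (bandM n m)

/-- `N([m_n, …, m_1])`: the number of connected components of `Γ([m_n, …, m_1])`. -/
noncomputable def NBand (n : ℕ) (m : ℕ → ℕ) : ℕ :=
  Nat.card (bandGraph n m).ConnectedComponent

namespace UD9

def Dn (P : ℕ → Prop) (n : ℕ) (β r : ℕ → ℕ) (p q : ℕ × ℕ) : Prop :=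
  1 ≤ p.1 ∧ p.1 ≤ n ∧ q.1 + 1 = p.1 ∧
    ((P p.1 ∧ q.2 = p.2 ∧ 1 ≤ p.2 ∧ p.2 ≤ r p.1) ∨
      (¬ P p.1 ∧ ∃ j, 1 ≤ j ∧ j ≤ r p.1 ∧ p.2 + j = β p.1 + 1 ∧ q.2 + j = β q.1 + 1))

def GAdj (P : ℕ → Prop) (n : ℕ) (β r : ℕ → ℕ) (p q : ℕ × ℕ) : Prop :=
  ∃ i j : ℕ, 1 ≤ i ∧ i ≤ n ∧ 1 ≤ j ∧ j ≤ r i ∧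
    ((P i ∧ ((p = (i, j) ∧ q = (i - 1, j)) ∨ (q = (i, j) ∧ p = (i - 1, j)))) ∨
      (¬ P i ∧ ((p = (i, β i + 1 - j) ∧ q = (i - 1, β (i - 1) + 1 - j)) ∨
        (q = (i, β i + 1 - j) ∧ p = (i - 1, β (i - 1) + 1 - j)))))

variable {P : ℕ → Prop} {n : ℕ} {β r : ℕ → ℕ}

lemma dn_mk {pi pj qi qj : ℕ} (h1 : 1 ≤ pi) (h2 : pi ≤ n) (h3 : qi + 1 = pi)
    (hc : (P pi ∧ qj = pj ∧ 1 ≤ pj ∧ pj ≤ r pi) ∨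
      (¬ P pi ∧ ∃ j, 1 ≤ j ∧ j ≤ r pi ∧ pj + j = β pi + 1 ∧ qj + j = β qi + 1)) :
    Dn P n β r (pi, pj) (qi, qj) :=
  ⟨h1, h2, h3, hc⟩

lemma dn_elim {pi pj qi qj : ℕ} (h : Dn P n β r (pi, pj) (qi, qj)) :
    1 ≤ pi ∧ pi ≤ n ∧ qi + 1 = pi ∧
      ((P pi ∧ qj = pj ∧ 1 ≤ pj ∧ pj ≤ r pi) ∨
        (¬ P pi ∧ ∃ j, 1 ≤ j ∧ j ≤ r pi ∧ pj + j = β pi + 1 ∧ qj + j = β qi + 1)) :=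
  h

lemma gadj_iff (hradm : ∀ i ≤ n, r i + r (i + 1) ≤ β i) (p q : ℕ × ℕ) :
    GAdj P n β r p q ↔ Dn P n β r p q ∨ Dn P n β r q p := by
  constructor
  · rintro ⟨i, j, h1, h2, h3, h4,
      (⟨hp, (⟨rfl, rfl⟩ | ⟨rfl, rfl⟩)⟩ | ⟨hp, (⟨rfl, rfl⟩ | ⟨rfl, rfl⟩)⟩)⟩
    · exact Or.inl (dn_mk h1 h2 (by omega) (Or.inl ⟨hp, rfl, h3, h4⟩))
    · exact Or.inr (dn_mk h1 h2 (by omega) (Or.inl ⟨hp, rfl, h3, h4⟩))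
    · have ha := hradm i h2
      have hb := hradm (i - 1) (by omega)
      have hc : i - 1 + 1 = i := by omega
      rw [hc] at hb
      exact Or.inl (dn_mk h1 h2 (by omega) (Or.inr ⟨hp, j, h3, h4, by omega, by omega⟩))
    · have ha := hradm i h2
      have hb := hradm (i - 1) (by omega)
      have hc : i - 1 + 1 = i := by omega
      rw [hc] at hb
      exact Or.inr (dn_mk h1 h2 (by omega) (Or.inr ⟨hp, j, h3, h4, by omega, by omega⟩))
  · obtain ⟨pi, pj⟩ := p
    obtain ⟨qi, qj⟩ := q
    rintro (h | h) <;> obtain ⟨h1, h2, h3, hc⟩ := dn_elim h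
    · obtain rfl : pi = qi + 1 := by omega
      rcases hc with ⟨hp, he, hl, hu⟩ | ⟨hp, j, hj1, hj2, he1, he2⟩
      · refine ⟨qi + 1, pj, h1, h2, hl, hu, Or.inl ⟨hp, Or.inl ⟨rfl, ?_⟩⟩⟩
        rw [Prod.mk.injEq, Nat.add_sub_cancel]
        omega
      · have ha := hradm (qi + 1) h2
        have hb := hradm qi (by omega)
        refine ⟨qi + 1, j, h1, h2, hj1, hj2, Or.inr ⟨hp, Or.inl ⟨?_, ?_⟩⟩⟩ <;>
          · simp only [Prod.mk.injEq, Nat.add_sub_cancel, true_and, and_true]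
            omega
    · obtain rfl : qi = pi + 1 := by omega
      rcases hc with ⟨hp, he, hl, hu⟩ | ⟨hp, j, hj1, hj2, he1, he2⟩
      · refine ⟨pi + 1, qj, h1, h2, hl, hu, Or.inl ⟨hp, Or.inr ⟨rfl, ?_⟩⟩⟩
        rw [Prod.mk.injEq, Nat.add_sub_cancel]
        omega
      · have ha := hradm (pi + 1) h2
        have hb := hradm pi (by omega)
        refine ⟨pi + 1, j, h1, h2, hj1, hj2, Or.inr ⟨hp, Or.inr ⟨?_, ?_⟩⟩⟩ <;>
          · simp only [Prod.mk.injEq, Nat.add_sub_cancel, true_and, and_true]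
            omega

lemma dn_valid (hradm : ∀ i ≤ n, r i + r (i + 1) ≤ β i) {p q : ℕ × ℕ}
    (h : Dn P n β r p q) :
    (p.1 ≤ n ∧ 1 ≤ p.2 ∧ p.2 ≤ β p.1) ∧ (q.1 ≤ n ∧ 1 ≤ q.2 ∧ q.2 ≤ β q.1) ∧ p ≠ q := by
  obtain ⟨pi, pj⟩ := p
  obtain ⟨qi, qj⟩ := q
  obtain ⟨h1, h2, h3, hc⟩ := dn_elim h
  obtain rfl : pi = qi + 1 := by omega
  have ha := hradm (qi + 1) h2
  have hb := hradm qi (by omega)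
  have hne : (qi + 1, pj) ≠ (qi, qj) := by
    simp only [ne_eq, Prod.mk.injEq, not_and]
    omega
  have hx1 : 1 ≤ pj ∧ pj ≤ β (qi + 1) := by
    rcases hc with ⟨hP, he, hl, hu⟩ | ⟨hP, j, hj1, hj2, he1, he2⟩ <;> constructor <;> omega
  have hx2 : 1 ≤ qj ∧ qj ≤ β qi := by
    rcases hc with ⟨hP, he, hl, hu⟩ | ⟨hP, j, hj1, hj2, he1, he2⟩ <;> constructor <;> omega
  exact ⟨⟨h2, hx1.1, hx1.2⟩, ⟨by omega, hx2.1, hx2.2⟩, hne⟩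

lemma gadj_unique (hP : ∀ i < n, (P (i + 1) ↔ ¬ P i))
    (hradm : ∀ i ≤ n, r i + r (i + 1) ≤ β i) {p q q' : ℕ × ℕ}
    (h : GAdj P n β r p q) (h' : GAdj P n β r p q') : q = q' := by
  rw [gadj_iff hradm] at h h'
  obtain ⟨pi, pj⟩ := p
  obtain ⟨qi, qj⟩ := q
  obtain ⟨qi', qj'⟩ := q'
  rcases h with h | h <;> rcases h' with h' | h' <;>
    obtain ⟨h1, h2, h3, hc⟩ := dn_elim h <;> obtain ⟨h1', h2', h3', hc'⟩ := dn_elim h'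
  · -- p top in both
    obtain rfl : qi' = qi := by omega
    rw [Prod.mk.injEq]
    rcases hc with ⟨hA, hc⟩ | ⟨hA, j, hj⟩ <;> rcases hc' with ⟨hB, hc'⟩ | ⟨hB, j', hj'⟩
    · constructor <;> omega
    · exact absurd hA hB
    · exact absurd hB hA
    · constructor <;> omega
  · -- p top of (p,q) and bottom of (q',p)
    exfalso
    obtain rfl : qi' = pi + 1 := by omega
    have hPP := hP pi (by omega)
    have ha := hradm pi h2
    rcases hc with ⟨hA, hc⟩ | ⟨hA, j, hj⟩ <;> rcases hc' with ⟨hB, hc'⟩ | ⟨hB, j', hj'⟩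
    · exact hPP.mp hB hA
    · omega
    · omega
    · exact hB (hPP.mpr hA)
  · exfalso
    obtain rfl : qi = pi + 1 := by omega
    have hPP := hP pi (by omega)
    have ha := hradm pi h2'
    rcases hc with ⟨hA, hc⟩ | ⟨hA, j, hj⟩ <;> rcases hc' with ⟨hB, hc'⟩ | ⟨hB, j', hj'⟩
    · exact hPP.mp hA hB
    · omega
    · omega
    · exact hA (hPP.mpr hB)
  · -- p bottom in both
    obtain rfl : qi' = qi := by omega
    rw [Prod.mk.injEq]
    rcases hc with ⟨hA, hc⟩ | ⟨hA, j, hj⟩ <;> rcases hc' with ⟨hB, hc'⟩ | ⟨hB, j', hj'⟩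
    · constructor <;> omega
    · exact absurd hA hB
    · exact absurd hB hA
    · constructor <;> omega

lemma gadj_symm {p q : ℕ × ℕ} (h : GAdj P n β r p q) : GAdj P n β r q p := by
  obtain ⟨i, j, h1, h2, h3, h4, hc⟩ := h
  exact ⟨i, j, h1, h2, h3, h4, by tauto⟩

lemma gadj_exists (hP : ∀ i < n, (P (i + 1) ↔ ¬ P i))
    (hradm : ∀ i ≤ n, r i + r (i + 1) ≤ β i)
    (hr0 : r 0 = 0) (hrn : r (n + 1) = 0) {i₀ : ℕ} (hi₀ : i₀ ≤ n)
    (hβ : β i₀ = r i₀ + r (i₀ + 1) + 1)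
    (hfull : ∀ i ≤ n, i ≠ i₀ → r i + r (i + 1) = β i)
    {g : ℕ} (hg : (P i₀ ∧ g = r i₀ + 1) ∨ (¬ P i₀ ∧ g = r (i₀ + 1) + 1))
    {p : ℕ × ℕ} (hv : p.1 ≤ n ∧ 1 ≤ p.2 ∧ p.2 ≤ β p.1)
    (hne : p ≠ (i₀, g)) : ∃ q, GAdj P n β r p q := by
  obtain ⟨pi, pj⟩ := p
  have h1 : pi ≤ n := hv.1
  have h2 : 1 ≤ pj := hv.2.1
  have h3 : pj ≤ β pi := hv.2.2
  have hgap : pi = i₀ → pj ≠ g := by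
    intro hh1 hh2
    exact hne (by rw [hh1, hh2])
  by_cases hPp : P pi
  · by_cases hdown : pj ≤ r pi
    · -- down edge, left attached
      have hpi1 : 1 ≤ pi := by
        rcases Nat.eq_zero_or_pos pi with h | h
        · subst h; rw [hr0] at hdown; omega
        · exact h
      exact ⟨(pi - 1, pj), (gadj_iff hradm _ _).mpr
        (Or.inl (dn_mk hpi1 h1 (by omega) (Or.inl ⟨hPp, rfl, h2, hdown⟩)))⟩
    · -- up edge, right attached at level pi
      have hkey : r pi + 1 ≤ pj ∧ pj + r (pi + 1) ≥ β pi + 1 := by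
        by_cases hi : pi = i₀
        · subst hi
          have hgg := hgap rfl
          rcases hg with ⟨hg1, hg2⟩ | ⟨hg1, hg2⟩
          · omega
          · exact absurd hPp hg1
        · have := hfull pi h1 hi
          omega
      have hj1 : 1 ≤ β pi + 1 - pj := by omega
      have hj2 : β pi + 1 - pj ≤ r (pi + 1) := by omega
      have hpin : pi < n := by
        rcases Nat.lt_or_ge pi n with h | h
        · exact h
        · exfalso
          obtain rfl : pi = n := by omega
          rw [hrn] at hj2
          omega
      have hP1 : ¬ P (pi + 1) := fun h => (hP pi hpin).mp h hPp
      have ha := hradm (pi + 1) (by omega)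
      refine ⟨(pi + 1, β (pi + 1) + 1 - (β pi + 1 - pj)), (gadj_iff hradm _ _).mpr
        (Or.inr (dn_mk (by omega) (by omega) rfl
          (Or.inr ⟨hP1, β pi + 1 - pj, hj1, hj2, by omega, by omega⟩)))⟩
  · by_cases hup : pj ≤ r (pi + 1)
    · -- up edge, left attached at level pi
      have hpin : pi < n := by
        rcases Nat.lt_or_ge pi n with h | h
        · exact h
        · exfalso
          obtain rfl : pi = n := by omega
          rw [hrn] at hup
          omega
      have hP1 : P (pi + 1) := (hP pi hpin).mpr hPp
      exact ⟨(pi + 1, pj), (gadj_iff hradm _ _).mpr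
        (Or.inr (dn_mk (by omega) (by omega) rfl (Or.inl ⟨hP1, rfl, h2, hup⟩)))⟩
    · -- down edge, right attached
      have hkey : r (pi + 1) + 1 ≤ pj ∧ pj + r pi ≥ β pi + 1 := by
        by_cases hi : pi = i₀
        · subst hi
          have hgg := hgap rfl
          rcases hg with ⟨hg1, hg2⟩ | ⟨hg1, hg2⟩
          · exact absurd hg1 hPp
          · omega
        · have := hfull pi h1 hi
          omega
      have hj1 : 1 ≤ β pi + 1 - pj := by omega
      have hj2 : β pi + 1 - pj ≤ r pi := by omega
      have hpi1 : 1 ≤ pi := by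
        rcases Nat.eq_zero_or_pos pi with h | h
        · exfalso; subst h; rw [hr0] at hj2; omega
        · exact h
      have ha := hradm (pi - 1) (by omega)
      have hc : pi - 1 + 1 = pi := by omega
      rw [hc] at ha
      refine ⟨(pi - 1, β (pi - 1) + 1 - (β pi + 1 - pj)), (gadj_iff hradm _ _).mpr
        (Or.inl (dn_mk hpi1 h1 (by omega)
          (Or.inr ⟨hPp, β pi + 1 - pj, hj1, hj2, by omega, by omega⟩)))⟩

lemma gadj_gap_none (hP : ∀ i < n, (P (i + 1) ↔ ¬ P i))
    (hradm : ∀ i ≤ n, r i + r (i + 1) ≤ β i)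
    {i₀ : ℕ} (hi₀ : i₀ ≤ n) (hβ : β i₀ = r i₀ + r (i₀ + 1) + 1)
    {g : ℕ} (hg : (P i₀ ∧ g = r i₀ + 1) ∨ (¬ P i₀ ∧ g = r (i₀ + 1) + 1)) :
    ¬ ∃ q, GAdj P n β r (i₀, g) q := by
  rintro ⟨q, hq⟩
  rw [gadj_iff hradm] at hq
  obtain ⟨qi, qj⟩ := q
  rcases hq with hq | hq <;> obtain ⟨h1, h2, h3, hc⟩ := dn_elim hq
  · -- down edge from the gap vertex
    rcases hc with ⟨hA, he, hl, hu⟩ | ⟨hA, j, hj1, hj2, he1, he2⟩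
    · rcases hg with ⟨hg1, hg2⟩ | ⟨hg1, hg2⟩
      · omega
      · exact absurd hA hg1
    · rcases hg with ⟨hg1, hg2⟩ | ⟨hg1, hg2⟩
      · exact absurd hg1 hA
      · omega
  · -- up edge from the gap vertex
    obtain rfl : qi = i₀ + 1 := by omega
    have hPP := hP i₀ (by omega)
    rcases hc with ⟨hA, he, hl, hu⟩ | ⟨hA, j, hj1, hj2, he1, he2⟩
    · have hnP : ¬ P i₀ := hPP.mp hA
      rcases hg with ⟨hg1, hg2⟩ | ⟨hg1, hg2⟩
      · exact absurd hg1 hnP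
      · omega
    · have hPi : P i₀ := by
        by_contra h
        exact hA (hPP.mpr h)
      rcases hg with ⟨hg1, hg2⟩ | ⟨hg1, hg2⟩
      · omega
      · exact absurd hPi hg1

lemma gadj_valid_right (hradm : ∀ i ≤ n, r i + r (i + 1) ≤ β i) {p q : ℕ × ℕ}
    (h : GAdj P n β r p q) : q.1 ≤ n ∧ 1 ≤ q.2 ∧ q.2 ≤ β q.1 := by
  rcases (gadj_iff hradm p q).mp h with hd | hd
  · exact (dn_valid hradm hd).2.1
  · exact (dn_valid hradm hd).1

lemma gadj_ne (hradm : ∀ i ≤ n, r i + r (i + 1) ≤ β i) {p q : ℕ × ℕ}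
    (h : GAdj P n β r p q) : p ≠ q := by
  rcases (gadj_iff hradm p q).mp h with hd | hd
  · exact (dn_valid hradm hd).2.2
  · exact (dn_valid hradm hd).2.2.symm

open Classical in
noncomputable def match1 {V : Type*} (A : V → V → Prop) : V → V :=
  fun p => if h : ∃ q, A p q then h.choose else p

lemma match1_spec {V : Type*} (A : V → V → Prop) (p : V) (h : ∃ q, A p q) :
    A p (match1 A p) := by
  rw [match1, dif_pos h]
  exact h.choose_spec

lemma match1_id {V : Type*} (A : V → V → Prop) (p : V) (h : ¬ ∃ q, A p q) :
    match1 A p = p := by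
  rw [match1, dif_neg h]


lemma gap_one (n : ℕ) (β r : ℕ → ℕ) (hr0 : r 0 = 0) (hrn : r (n + 1) = 0)
    (hradm : ∀ i ≤ n, r i + r (i + 1) ≤ β i)
    (halt : (∑ i ∈ Finset.range (n + 1), (-1 : ℤ) ^ i * (β i : ℤ)) = 1 ∨
      (∑ i ∈ Finset.range (n + 1), (-1 : ℤ) ^ i * (β i : ℤ)) = -1)
    (i₀ : ℕ) (hi₀n : i₀ ≤ n)
    (hfull : ∀ i ≤ n, i ≠ i₀ → r i + r (i + 1) = β i) :
    β i₀ = r i₀ + r (i₀ + 1) + 1 := by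
  have hsplit : ∑ i ∈ Finset.range (n + 1), (-1 : ℤ) ^ i * (β i : ℤ)
      = (∑ i ∈ Finset.range (n + 1), ((-1 : ℤ) ^ i * (r i : ℤ) + (-1 : ℤ) ^ i * (r (i + 1) : ℤ)))
        + ∑ i ∈ Finset.range (n + 1), (-1 : ℤ) ^ i * ((β i : ℤ) - (r i : ℤ) - (r (i + 1) : ℤ)) := by
    rw [← Finset.sum_add_distrib]
    apply Finset.sum_congr rfl
    intros
    ring
  have h1 : ∑ i ∈ Finset.range (n + 2), (-1 : ℤ) ^ i * (r i : ℤ)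
      = ∑ i ∈ Finset.range (n + 1), (-1 : ℤ) ^ i * (r i : ℤ) := by
    rw [Finset.sum_range_succ, hrn]
    simp
  have h2 : ∑ i ∈ Finset.range (n + 2), (-1 : ℤ) ^ i * (r i : ℤ)
      = -(∑ i ∈ Finset.range (n + 1), (-1 : ℤ) ^ i * (r (i + 1) : ℤ)) + (r 0 : ℤ) := by
    rw [Finset.sum_range_succ' (fun i => (-1 : ℤ) ^ i * (r i : ℤ)) (n + 1)]
    congr 1
    · rw [← Finset.sum_neg_distrib]
      apply Finset.sum_congr rfl
      intros
      ring
    · simp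
  have htel : (∑ i ∈ Finset.range (n + 1),
      ((-1 : ℤ) ^ i * (r i : ℤ) + (-1 : ℤ) ^ i * (r (i + 1) : ℤ))) = 0 := by
    rw [Finset.sum_add_distrib]
    rw [hr0] at h2
    push_cast at h2
    linarith [h1, h2]
  have hsingle : ∑ i ∈ Finset.range (n + 1), (-1 : ℤ) ^ i * ((β i : ℤ) - (r i : ℤ) - (r (i + 1) : ℤ))
      = (-1 : ℤ) ^ i₀ * ((β i₀ : ℤ) - (r i₀ : ℤ) - (r (i₀ + 1) : ℤ)) := by
    apply Finset.sum_eq_single_of_mem i₀ (Finset.mem_range.mpr (by omega))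
    intro i hi hne
    have hif := hfull i (Nat.lt_succ_iff.mp (Finset.mem_range.mp hi)) hne
    rw [← hif]
    push_cast
    ring
  have hb := hradm i₀ hi₀n
  rcases Nat.even_or_odd i₀ with hpar | hpar
  · rw [hpar.neg_one_pow, one_mul] at hsingle
    rcases halt with h | h <;> (rw [hsplit, htel, zero_add, hsingle] at h; omega)
  · rw [hpar.neg_one_pow, neg_one_mul] at hsingle
    rcases halt with h | h <;> (rw [hsplit, htel, zero_add, hsingle] at h; omega)

theorem alt_reach {V : Type*} [Finite V] (G : SimpleGraph V) (ρ σ : V → V)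
    (hρ : Function.Involutive ρ) (hσ : Function.Involutive σ)
    (haρ : ∀ v, ρ v ≠ v → G.Adj v (ρ v))
    (haσ : ∀ v, σ v ≠ v → G.Adj v (σ v))
    (u w : V) (hu : ρ u = u) (huu : ∀ v, ρ v = v → v = u)
    (hww : ∀ v, σ v = v → v = w) : G.Reachable u w := by
  set φ : V → V := σ ∘ ρ with hφ
  have hφinj : Function.Injective φ := hσ.injective.comp hρ.injective
  have step : ∀ x, G.Reachable x (φ x) := by
    intro x
    have h1 : G.Reachable x (ρ x) := by
      by_cases h : ρ x = x
      · rw [h]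
      · exact (haρ x h).reachable
    have h2 : G.Reachable (ρ x) (σ (ρ x)) := by
      by_cases h : σ (ρ x) = ρ x
      · rw [h]
      · exact (haσ _ h).reachable
    exact h1.trans h2
  have reach : ∀ k, G.Reachable u (φ^[k] u) := by
    intro k; induction k with
    | zero => exact SimpleGraph.Reachable.refl u
    | succ k ih =>
      rw [Function.iterate_succ_apply']
      exact ih.trans (step _)
  have cρ1 : ∀ z, φ (ρ (φ z)) = ρ z := by
    intro z; show σ (ρ (ρ (σ (ρ z)))) = ρ z; rw [hρ, hσ]
  have cσ1 : ∀ z, φ (σ (φ z)) = σ z := by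
    intro z; show σ (ρ (σ (σ (ρ z)))) = σ z; rw [hσ, hρ]
  have cρ : ∀ k z, φ^[k] (ρ (φ^[k] z)) = ρ z := by
    intro k; induction k with
    | zero => intro z; rfl
    | succ k ih =>
      intro z
      rw [Function.iterate_succ_apply φ k (ρ (φ^[k+1] z)),
        Function.iterate_succ_apply' φ k z, cρ1, ih]
  have cσ : ∀ k z, φ^[k] (σ (φ^[k] z)) = σ z := by
    intro k; induction k with
    | zero => intro z; rfl
    | succ k ih =>
      intro z
      rw [Function.iterate_succ_apply φ k (σ (φ^[k+1] z)),
        Function.iterate_succ_apply' φ k z, cσ1, ih]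
  have hper : ∃ m, 0 < m ∧ φ^[m] u = u := by
    obtain ⟨a, b, hab, he⟩ := Finite.exists_ne_map_eq_of_infinite (fun k : ℕ => φ^[k] u)

    rcases lt_or_gt_of_ne hab with h | h
    · refine ⟨b - a, by omega, hφinj.iterate a ?_⟩
      rw [← Function.iterate_add_apply]
      have : a + (b - a) = b := by omega
      rw [this, ← he]
    · refine ⟨a - b, by omega, hφinj.iterate b ?_⟩
      rw [← Function.iterate_add_apply]
      have : b + (a - b) = a := by omega
      rw [this, he]
  obtain ⟨m, hm, hmu⟩ := hper
  have hmp : Function.IsPeriodicPt φ m u := hmu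
  have hdpos : 0 < Function.minimalPeriod φ u := hmp.minimalPeriod_pos hm
  set d := Function.minimalPeriod φ u with hd
  have hdu : φ^[d] u = u := Function.iterate_minimalPeriod
  rcases Nat.even_or_odd d with he | ho
  · exfalso
    obtain ⟨k, hk⟩ := he
    have hkpos : 0 < k := by omega
    have h1 : φ^[k] (ρ (φ^[k] u)) = u := by rw [cρ, hu]
    have h2 : φ^[k] (φ^[k] u) = u := by
      rw [← Function.iterate_add_apply]
      have : k + k = d := by omega
      rw [this, hdu]
    have h3 : ρ (φ^[k] u) = φ^[k] u := hφinj.iterate k (h1.trans h2.symm)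
    have h4 : φ^[k] u = u := huu _ h3
    have h5 : Function.IsPeriodicPt φ k u := h4
    have := h5.minimalPeriod_le hkpos
    omega
  · obtain ⟨k, hk⟩ := ho
    set t := k + 1 with ht
    have h1 : φ^[t] (σ (φ^[t] u)) = σ u := cσ t u
    have h2 : σ u = φ u := by
      conv_lhs => rw [← hu]
      rfl
    have h3 : φ^[t] (φ^[t] u) = φ u := by
      rw [← Function.iterate_add_apply]
      have : t + t = 1 + d := by omega
      rw [this, Function.iterate_add_apply, hdu]
      rfl
    have h4 : σ (φ^[t] u) = φ^[t] u := hφinj.iterate t (by rw [h1, h2, ← h3])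
    have h5 : φ^[t] u = w := hww _ h4
    exact h5 ▸ reach t

lemma udvert_finite (n : ℕ) (β : ℕ → ℕ) : Finite (UDVert n β) := by
  have h : {p : ℕ × ℕ | p.1 ≤ n ∧ 1 ≤ p.2 ∧ p.2 ≤ β p.1}.Finite := by
    apply Set.Finite.subset (Set.finite_Icc ((0 : ℕ), (0 : ℕ)) (n, (Finset.range (n + 1)).sup β))
    rintro ⟨a, b⟩ ⟨h1, h2, h3⟩
    simp only [Set.mem_Icc, Prod.le_def]
    exact ⟨⟨by omega, by omega⟩, h1,
      le_trans h3 (Finset.le_sup (Finset.mem_range.mpr (by omega)))⟩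
  exact h.to_subtype

end UD9

/-- For a string component `(β; r, s)`: the up-and-down graph has exactly one vertex
`pr` not incident to a red edge and exactly one vertex `pb` not incident to a blue edge;
every other vertex is incident to exactly one red resp. blue edge; `pr` and `pb` lie in
the same connected component; and exactly one connected component contains a vertex
missing an edge of one of the colors (so exactly one component is a string and all the
others are bands). -/


theorem stmt9 (n : ℕ) (hn : 1 ≤ n) (β r s : ℕ → ℕ)
    (hr0 : r 0 = 0) (hrn : r (n + 1) = 0) (hs0 : s 0 = 0) (hsn : s (n + 1) = 0)
    (hradm : ∀ i ≤ n, r i + r (i + 1) ≤ β i)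
    (hsadm : ∀ i ≤ n, s i + s (i + 1) ≤ β i)
    (halt : (∑ i ∈ Finset.range (n + 1), (-1 : ℤ) ^ i * (β i : ℤ)) = 1 ∨
      (∑ i ∈ Finset.range (n + 1), (-1 : ℤ) ^ i * (β i : ℤ)) = -1)
    (hrexc : ∃! i : ℕ, i ≤ n ∧ r i + r (i + 1) ≠ β i)
    (hsexc : ∃! i : ℕ, i ≤ n ∧ s i + s (i + 1) ≠ β i) :
    ∃ pr pb : UDVert n β,
      (¬ ∃ q : UDVert n β, RedAdj n β r pr.1 q.1) ∧
      (∀ p : UDVert n β, (¬ ∃ q : UDVert n β, RedAdj n β r p.1 q.1) → p = pr) ∧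
      (¬ ∃ q : UDVert n β, BlueAdj n β s pb.1 q.1) ∧
      (∀ p : UDVert n β, (¬ ∃ q : UDVert n β, BlueAdj n β s p.1 q.1) → p = pb) ∧
      (∀ p : UDVert n β, p ≠ pr → ∃! q : UDVert n β, RedAdj n β r p.1 q.1) ∧
      (∀ p : UDVert n β, p ≠ pb → ∃! q : UDVert n β, BlueAdj n β s p.1 q.1) ∧
      (UDGraph n β r s).Reachable pr pb ∧
      (∃! C : (UDGraph n β r s).ConnectedComponent,
        ∃ p : UDVert n β, (UDGraph n β r s).connectedComponentMk p = C ∧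
          ((¬ ∃ q : UDVert n β, RedAdj n β r p.1 q.1) ∨
            (¬ ∃ q : UDVert n β, BlueAdj n β s p.1 q.1))) := by
  classical
  haveI : Finite (UDVert n β) := UD9.udvert_finite n β
  obtain ⟨ir, ⟨hirn, hirne⟩, hiru⟩ := hrexc
  obtain ⟨ib, ⟨hibn, hibne⟩, hibu⟩ := hsexc
  have hrfull : ∀ i ≤ n, i ≠ ir → r i + r (i + 1) = β i := by
    intro i hin hne
    by_contra h
    exact hne (hiru i ⟨hin, h⟩)
  have hsfull : ∀ i ≤ n, i ≠ ib → s i + s (i + 1) = β i := by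
    intro i hin hne
    by_contra h
    exact hne (hibu i ⟨hin, h⟩)
  have hβr := UD9.gap_one n β r hr0 hrn hradm halt ir hirn hrfull
  have hβb := UD9.gap_one n β s hs0 hsn hsadm halt ib hibn hsfull
  -- parity predicates
  have hPr : ∀ i < n, (Even (n - (i + 1)) ↔ ¬ Even (n - i)) := by
    intro i hi
    have hsub : n - i = (n - (i + 1)) + 1 := by omega
    rw [hsub, Nat.even_add_one]
    exact not_not.symm
  have hPb : ∀ i < n, (¬ Even (n - (i + 1)) ↔ ¬ ¬ Even (n - i)) := by
    intro i hi
    have := hPr i hi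
    tauto
  have hblue : ∀ p q : ℕ × ℕ, BlueAdj n β s p q ↔
      UD9.GAdj (fun i => ¬ Even (n - i)) n β s p q := by
    intro p q
    constructor
    · rintro ⟨i, j, h1, h2, h3, h4, ⟨hp, hA⟩ | ⟨hp, hA⟩⟩
      · exact ⟨i, j, h1, h2, h3, h4, Or.inl ⟨hp, hA⟩⟩
      · exact ⟨i, j, h1, h2, h3, h4, Or.inr ⟨not_not.mpr hp, hA⟩⟩
    · rintro ⟨i, j, h1, h2, h3, h4, ⟨hp, hA⟩ | ⟨hp, hA⟩⟩
      · exact ⟨i, j, h1, h2, h3, h4, Or.inl ⟨hp, hA⟩⟩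
      · exact ⟨i, j, h1, h2, h3, h4, Or.inr ⟨not_not.mp hp, hA⟩⟩
  -- the red gap vertex
  let jr := if Even (n - ir) then r ir + 1 else r (ir + 1) + 1
  have hgr : (Even (n - ir) ∧ jr = r ir + 1) ∨ (¬ Even (n - ir) ∧ jr = r (ir + 1) + 1) := by
    by_cases h : Even (n - ir)
    · exact Or.inl ⟨h, if_pos h⟩
    · exact Or.inr ⟨h, if_neg h⟩
  have hjr1 : 1 ≤ jr := by rcases hgr with ⟨_, h⟩ | ⟨_, h⟩ <;> omega
  have hjr2 : jr ≤ β ir := by rcases hgr with ⟨_, h⟩ | ⟨_, h⟩ <;> omega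
  let pr : UDVert n β := ⟨(ir, jr), hirn, hjr1, hjr2⟩
  -- the blue gap vertex
  let jb := if Even (n - ib) then s (ib + 1) + 1 else s ib + 1
  have hgb : (¬ Even (n - ib) ∧ jb = s ib + 1) ∨
      (¬ ¬ Even (n - ib) ∧ jb = s (ib + 1) + 1) := by
    by_cases h : Even (n - ib)
    · exact Or.inr ⟨not_not.mpr h, if_pos h⟩
    · exact Or.inl ⟨h, if_neg h⟩
  have hjb1 : 1 ≤ jb := by rcases hgb with ⟨_, h⟩ | ⟨_, h⟩ <;> omega
  have hjb2 : jb ≤ β ib := by rcases hgb with ⟨_, h⟩ | ⟨_, h⟩ <;> omega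
  let pb : UDVert n β := ⟨(ib, jb), hibn, hjb1, hjb2⟩
  -- red structure
  have hRnone : ¬ ∃ q : UDVert n β, RedAdj n β r pr.1 q.1 := by
    rintro ⟨q, hq⟩
    exact UD9.gadj_gap_none hPr hradm hirn hβr hgr ⟨q.1, hq⟩
  have hRuniq : ∀ p : UDVert n β, (¬ ∃ q : UDVert n β, RedAdj n β r p.1 q.1) → p = pr := by
    intro p hnone
    by_contra hne
    have hne' : p.1 ≠ (ir, jr) := fun h => hne (Subtype.ext h)
    obtain ⟨q, hq⟩ := UD9.gadj_exists (P := fun i => Even (n - i)) hPr hradm hr0 hrn hirn hβr hrfull hgr p.2 hne'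
    exact hnone ⟨⟨q, UD9.gadj_valid_right hradm hq⟩, hq⟩
  have hRex : ∀ p : UDVert n β, p ≠ pr → ∃! q : UDVert n β, RedAdj n β r p.1 q.1 := by
    intro p hne
    have hne' : p.1 ≠ (ir, jr) := fun h => hne (Subtype.ext h)
    obtain ⟨q, hq⟩ := UD9.gadj_exists (P := fun i => Even (n - i)) hPr hradm hr0 hrn hirn hβr hrfull hgr p.2 hne'
    refine ⟨⟨q, UD9.gadj_valid_right hradm hq⟩, hq, ?_⟩
    intro y hy
    exact Subtype.ext (UD9.gadj_unique hPr hradm hy hq)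
  -- blue structure
  have hBnone : ¬ ∃ q : UDVert n β, BlueAdj n β s pb.1 q.1 := by
    rintro ⟨q, hq⟩
    exact UD9.gadj_gap_none hPb hsadm hibn hβb hgb ⟨q.1, (hblue _ _).mp hq⟩
  have hBuniq : ∀ p : UDVert n β, (¬ ∃ q : UDVert n β, BlueAdj n β s p.1 q.1) → p = pb := by
    intro p hnone
    by_contra hne
    have hne' : p.1 ≠ (ib, jb) := fun h => hne (Subtype.ext h)
    obtain ⟨q, hq⟩ := UD9.gadj_exists (P := fun i => ¬ Even (n - i)) hPb hsadm hs0 hsn hibn hβb hsfull hgb p.2 hne'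
    exact hnone ⟨⟨q, UD9.gadj_valid_right hsadm hq⟩, (hblue _ _).mpr hq⟩
  have hBex : ∀ p : UDVert n β, p ≠ pb → ∃! q : UDVert n β, BlueAdj n β s p.1 q.1 := by
    intro p hne
    have hne' : p.1 ≠ (ib, jb) := fun h => hne (Subtype.ext h)
    obtain ⟨q, hq⟩ := UD9.gadj_exists (P := fun i => ¬ Even (n - i)) hPb hsadm hs0 hsn hibn hβb hsfull hgb p.2 hne'
    refine ⟨⟨q, UD9.gadj_valid_right hsadm hq⟩, (hblue _ _).mpr hq, ?_⟩
    intro y hy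
    exact Subtype.ext (UD9.gadj_unique hPb hsadm ((hblue _ _).mp hy) hq)
  -- the matchings as involutions
  let ρ : UDVert n β → UDVert n β :=
    UD9.match1 (fun p q : UDVert n β => RedAdj n β r p.1 q.1)
  let σ : UDVert n β → UDVert n β :=
    UD9.match1 (fun p q : UDVert n β => BlueAdj n β s p.1 q.1)
  have hρ_spec : ∀ p : UDVert n β, (∃ q : UDVert n β, RedAdj n β r p.1 q.1) →
      RedAdj n β r p.1 (ρ p).1 :=
    fun p h => UD9.match1_spec (fun p q : UDVert n β => RedAdj n β r p.1 q.1) p h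
  have hρ_id : ∀ p : UDVert n β, ¬ (∃ q : UDVert n β, RedAdj n β r p.1 q.1) → ρ p = p :=
    fun p h => UD9.match1_id (fun p q : UDVert n β => RedAdj n β r p.1 q.1) p h
  have hσ_spec : ∀ p : UDVert n β, (∃ q : UDVert n β, BlueAdj n β s p.1 q.1) →
      BlueAdj n β s p.1 (σ p).1 :=
    fun p h => UD9.match1_spec (fun p q : UDVert n β => BlueAdj n β s p.1 q.1) p h
  have hσ_id : ∀ p : UDVert n β, ¬ (∃ q : UDVert n β, BlueAdj n β s p.1 q.1) → σ p = p :=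
    fun p h => UD9.match1_id (fun p q : UDVert n β => BlueAdj n β s p.1 q.1) p h
  have hρ_ne : ∀ p : UDVert n β, (∃ q : UDVert n β, RedAdj n β r p.1 q.1) → ρ p ≠ p := by
    intro p h heq
    have h2 : p.1 ≠ (ρ p).1 := UD9.gadj_ne hradm (hρ_spec p h)
    exact h2 (by rw [heq])
  have hσ_ne : ∀ p : UDVert n β, (∃ q : UDVert n β, BlueAdj n β s p.1 q.1) → σ p ≠ p := by
    intro p h heq
    have h2 : p.1 ≠ (σ p).1 := UD9.gadj_ne hsadm ((hblue _ _).mp (hσ_spec p h))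
    exact h2 (by rw [heq])
  have hρ_inv : Function.Involutive ρ := by
    intro p
    by_cases h : ∃ q : UDVert n β, RedAdj n β r p.1 q.1
    · have h1 := hρ_spec p h
      have h1' : UD9.GAdj (fun i => Even (n - i)) n β r (ρ p).1 p.1 := UD9.gadj_symm h1
      have h2 : ∃ q : UDVert n β, RedAdj n β r (ρ p).1 q.1 := ⟨p, h1'⟩
      have h3 := hρ_spec (ρ p) h2
      exact Subtype.ext (UD9.gadj_unique hPr hradm h3 h1')
    · rw [hρ_id p h, hρ_id p h]
  have hσ_inv : Function.Involutive σ := by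
    intro p
    by_cases h : ∃ q : UDVert n β, BlueAdj n β s p.1 q.1
    · have h1 := (hblue _ _).mp (hσ_spec p h)
      have h1' := UD9.gadj_symm h1
      have h2 : ∃ q : UDVert n β, BlueAdj n β s (σ p).1 q.1 := ⟨p, (hblue _ _).mpr h1'⟩
      have h3 := (hblue _ _).mp (hσ_spec (σ p) h2)
      exact Subtype.ext (UD9.gadj_unique hPb hsadm h3 h1')
    · rw [hσ_id p h, hσ_id p h]
  -- reachability via the abstract lemma
  have haρ : ∀ v : UDVert n β, ρ v ≠ v → (UDGraph n β r s).Adj v (ρ v) := by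
    intro v hv
    have h : ∃ q : UDVert n β, RedAdj n β r v.1 q.1 := by
      by_contra h
      exact hv (hρ_id v h)
    exact ⟨fun he => hv he.symm, Or.inl (hρ_spec v h)⟩
  have haσ : ∀ v : UDVert n β, σ v ≠ v → (UDGraph n β r s).Adj v (σ v) := by
    intro v hv
    have h : ∃ q : UDVert n β, BlueAdj n β s v.1 q.1 := by
      by_contra h
      exact hv (hσ_id v h)
    exact ⟨fun he => hv he.symm, Or.inr (hσ_spec v h)⟩
  have huu : ∀ v : UDVert n β, ρ v = v → v = pr := by
    intro v hv
    refine hRuniq v (fun hex => hρ_ne v hex hv)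
  have hww : ∀ v : UDVert n β, σ v = v → v = pb := by
    intro v hv
    refine hBuniq v (fun hex => hσ_ne v hex hv)
  have reach : (UDGraph n β r s).Reachable pr pb :=
    UD9.alt_reach (UDGraph n β r s) ρ σ hρ_inv hσ_inv haρ haσ pr pb
      (hρ_id pr hRnone) huu hww
  refine ⟨pr, pb, hRnone, hRuniq, hBnone, hBuniq, hRex, hBex, reach,
    (UDGraph n β r s).connectedComponentMk pr, ⟨pr, rfl, Or.inl hRnone⟩, ?_⟩
  rintro C ⟨p, rfl, hc | hc⟩
  · rw [hRuniq p hc]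
  · rw [hBuniq p hc]
    exact SimpleGraph.ConnectedComponent.sound reach.symm
end

section
/- Let K be a field of characteristic zero, n ≥ 2, S = K[A_1,…,A_n,B_1,…,B_n], and let Θ be a symmetric matching on Z(n−1) with orbits O_1,…,O_{n−1}. For each orbit O_j define an action of the multiplicative group Kˣ on S by K-algebra automorphisms scaling variables as follows: if O_j = {x_k, y_l}, then t ∈ Kˣ sends A_k ↦ tA_k, A_{k+1} ↦ tA_{k+1}, B_l ↦ t^{−1}B_l, B_{l+1} ↦ t^{−1}B_{l+1} and fixes all other variables; if O_j = {x_k, x_l} with k < l, then t sends A_k ↦ tA_k, A_{k+1} ↦ tA_{k+1}, A_l ↦ t^{−1}A_l, A_{l+1} ↦ t^{−1}A_{l+1} and fixes all other variables; if O_j = {y_k, y_l} with k < l, then t sends B_k ↦ tB_k, B_{k+1} ↦ tB_{k+1}, B_l ↦ t^{−1}B_l, B_{l+1} ↦ t^{−1}B_{l+1} and fixes all other variables (if a variable is affected twice within one orbit's action, the scalings are multiplied). These actions for j = 1,…,n−1 commute and define an action of the torus (Kˣ)^{n−1} on S. Then the ring of invariants S^{(Kˣ)^{n−1}} equals S(Θ).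 -/
open MvPolynomial

/-- The variable `A_i` (1-indexed `i`; here `i : Fin n` is the 0-indexed position). -/
noncomputable def Av (K : Type*) [Field K] (n : ℕ) (i : Fin n) :
    MvPolynomial (Fin n ⊕ Fin n) K := X (Sum.inl i)

/-- The variable `B_i` (1-indexed `i`; here `i : Fin n` is the 0-indexed position). -/
noncomputable def Bv (K : Type*) [Field K] (n : ℕ) (i : Fin n) :
    MvPolynomial (Fin n ⊕ Fin n) K := X (Sum.inr i)

/-- The monomial `A_1^{u 1} ⋯ A_n^{u n} · B_1^{v 1} ⋯ B_n^{v n}` (1-indexed exponents). -/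
noncomputable def monAB (K : Type*) [Field K] (n : ℕ) (u v : ℕ → ℕ) :
    MvPolynomial (Fin n ⊕ Fin n) K :=
  (∏ i : Fin n, X (Sum.inl i) ^ u ((i : ℕ) + 1)) *
    ∏ i : Fin n, X (Sum.inr i) ^ v ((i : ℕ) + 1)

/-- The `K`-span of the monomials whose (1-indexed) exponent vectors satisfy the
control equations `E`; this is the ring `S(Θ)` when `E` is the system of control
equations of a matching `Θ`. -/
noncomputable def controlSpan (K : Type*) [Field K] (n : ℕ)
    (E : (ℕ → ℕ) → (ℕ → ℕ) → Prop) :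
    Submodule K (MvPolynomial (Fin n ⊕ Fin n) K) :=
  Submodule.span K {p | ∃ u v : ℕ → ℕ, E u v ∧ p = monAB K n u v}

/-- The control equations of a symmetric matching `Θ` on
`Z(n-1) = {x_1,…,x_{n-1}, y_1,…,y_{n-1}}` (here `x_k ↔ Sum.inl ⟨k-1⟩`,
`y_k ↔ Sum.inr ⟨k-1⟩`), on 1-indexed exponent vectors `u, v`. -/
def ctrlEq (n : ℕ) (Θ : Fin (n - 1) ⊕ Fin (n - 1) → Fin (n - 1) ⊕ Fin (n - 1))
    (u v : ℕ → ℕ) : Prop :=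
  ∀ i j : Fin (n - 1),
    (Θ (Sum.inl i) = Sum.inr j →
      u ((i : ℕ) + 1) + u ((i : ℕ) + 2) = v ((j : ℕ) + 1) + v ((j : ℕ) + 2) ∧
      u ((j : ℕ) + 1) + u ((j : ℕ) + 2) = v ((i : ℕ) + 1) + v ((i : ℕ) + 2)) ∧
    (Θ (Sum.inl i) = Sum.inl j →
      u ((i : ℕ) + 1) + u ((i : ℕ) + 2) = u ((j : ℕ) + 1) + u ((j : ℕ) + 2) ∧
      v ((i : ℕ) + 1) + v ((i : ℕ) + 2) = v ((j : ℕ) + 1) + v ((j : ℕ) + 2))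

/-- The basic weight of `z ∈ Z(n-1)` on the variables: `x_k` (resp. `y_k`) scales
`A_k, A_{k+1}` (resp. `B_k, B_{k+1}`) by `t` (0-indexed: variables `k-1, k`). -/
def posWt (n : ℕ) (z : Fin (n - 1) ⊕ Fin (n - 1)) (w : Fin n ⊕ Fin n) : ℤ :=
  match z, w with
  | Sum.inl k, Sum.inl a => if (a : ℕ) = (k : ℕ) ∨ (a : ℕ) = (k : ℕ) + 1 then 1 else 0
  | Sum.inr k, Sum.inr a => if (a : ℕ) = (k : ℕ) ∨ (a : ℕ) = (k : ℕ) + 1 then 1 else 0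
  | _, _ => 0

/-- The weight with which the one-parameter subgroup attached to the orbit
`{z, Θ z}` of `Θ` scales a variable: the two variables next to `z` get weight `+1`
and the two variables next to `Θ z` get weight `-1`. -/
def wtTheta (n : ℕ) (Θ : Fin (n - 1) ⊕ Fin (n - 1) → Fin (n - 1) ⊕ Fin (n - 1))
    (z : Fin (n - 1) ⊕ Fin (n - 1)) (w : Fin n ⊕ Fin n) : ℤ :=
  posWt n z w - posWt n (Θ z) w

section Aux

variable {K : Type*} [Field K] {n : ℕ}

lemma zpow_sum' {G : Type*} [CommGroup G] {ι : Type*} (a : G) (s : Finset ι) (f : ι → ℤ) :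
    a ^ (∑ i ∈ s, f i) = ∏ i ∈ s, a ^ f i := by
  induction s using Finset.cons_induction with
  | empty => simp
  | cons i s hi ih => rw [Finset.sum_cons, Finset.prod_cons, zpow_add, ih]

lemma two_zpow_eq_one {S : ℤ} [CharZero K] (h : (2 : K) ^ S = 1) : S = 0 := by
  have key : ∀ k : ℕ, (2 : K) ^ (k : ℕ) = 1 → k = 0 := by
    intro k hk
    have : ((2 ^ k : ℕ) : K) = ((1 : ℕ) : K) := by push_cast; simpa using hk
    have h2 : (2 : ℕ) ^ k = 1 := Nat.cast_injective this
    by_contra hk0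
    exact absurd ((pow_eq_one_iff_left hk0).mp h2) (by norm_num)
  cases S with
  | ofNat k =>
    have h' : (2 : K) ^ (k : ℤ) = 1 := h
    rw [zpow_natCast] at h'
    simp [key k h']
  | negSucc k =>
    rw [zpow_negSucc, inv_eq_one] at h
    have := key (k + 1) h
    omega

lemma sum_ite_pair {α : Type*} [Fintype α] [DecidableEq α] {b c : α} (hbc : b ≠ c)
    (g : α → ℤ) : (∑ a : α, if a = b ∨ a = c then g a else 0) = g b + g c := by
  have h : ∀ a : α, (if a = b ∨ a = c then g a else 0) =
      (if a = b then g a else 0) + (if a = c then g a else 0) := by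
    intro a
    by_cases h1 : a = b
    · subst h1; simp [hbc]
    · by_cases h2 : a = c
      · subst h2; simp [h1]
      · simp [h1, h2]
  simp_rw [h, Finset.sum_add_distrib, Finset.sum_ite_eq', Finset.mem_univ, if_true]

/-- The exponent Finsupp of `monAB`. -/
noncomputable def dOf (n : ℕ) (u v : ℕ → ℕ) : (Fin n ⊕ Fin n) →₀ ℕ :=
  Finsupp.equivFunOnFinite.symm
    (Sum.elim (fun i : Fin n => u ((i : ℕ) + 1)) (fun i : Fin n => v ((i : ℕ) + 1)))

@[simp] lemma dOf_inl (u v : ℕ → ℕ) (i : Fin n) : dOf n u v (Sum.inl i) = u ((i : ℕ) + 1) := rfl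
@[simp] lemma dOf_inr (u v : ℕ → ℕ) (i : Fin n) : dOf n u v (Sum.inr i) = v ((i : ℕ) + 1) := rfl

lemma monomial_one_eq_prod (d : (Fin n ⊕ Fin n) →₀ ℕ) :
    (monomial d (1 : K)) = ∏ w : Fin n ⊕ Fin n, (X w : MvPolynomial (Fin n ⊕ Fin n) K) ^ d w := by
  rw [monomial_eq, Finsupp.prod_fintype _ _ (fun i => pow_zero _), map_one, one_mul]

lemma monAB_eq (u v : ℕ → ℕ) :
    monAB K n u v = monomial (dOf n u v) (1 : K) := by
  rw [monomial_one_eq_prod, Fintype.prod_sum_type]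
  rfl

lemma aeval_smul_monomial (s : Fin n ⊕ Fin n → K) (d : (Fin n ⊕ Fin n) →₀ ℕ) (c : K) :
    aeval (R := K) (fun w => s w • (X w : MvPolynomial (Fin n ⊕ Fin n) K)) (monomial d c) =
      (∏ w : Fin n ⊕ Fin n, s w ^ d w) • monomial d c := by
  rw [aeval_monomial, Finsupp.prod_fintype _ _ (fun i => pow_zero _)]
  simp_rw [smul_pow, smul_eq_C_mul]
  rw [Finset.prod_mul_distrib, ← map_prod (C : K →+* MvPolynomial (Fin n ⊕ Fin n) K) _ Finset.univ,
    ← monomial_one_eq_prod, algebraMap_eq, mul_left_comm, C_mul_monomial, mul_one]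

lemma coeff_aeval_diag (s : Fin n ⊕ Fin n → K) (p : MvPolynomial (Fin n ⊕ Fin n) K)
    (d : (Fin n ⊕ Fin n) →₀ ℕ) :
    coeff d (aeval (R := K) (fun w => s w • (X w : MvPolynomial (Fin n ⊕ Fin n) K)) p) =
      (∏ w : Fin n ⊕ Fin n, s w ^ d w) * coeff d p := by
  conv_lhs => rw [p.as_sum, map_sum]
  rw [coeff_sum]
  simp_rw [aeval_smul_monomial, coeff_smul, coeff_monomial, smul_eq_mul, mul_ite, mul_zero]
  rw [Finset.sum_ite_eq' p.support d]
  split_ifs with hd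
  · rfl
  · rw [notMem_support_iff.mp hd, mul_zero]

lemma prod_pow_units (t : Kˣ) (m : Fin n ⊕ Fin n → ℤ) (d : (Fin n ⊕ Fin n) →₀ ℕ) :
    (∏ w : Fin n ⊕ Fin n, (((t ^ m w : Kˣ) : K)) ^ d w) =
      ((t ^ (∑ w : Fin n ⊕ Fin n, m w * (d w : ℤ)) : Kˣ) : K) := by
  rw [zpow_sum', ← Units.coeHom_apply, map_prod]
  refine Finset.prod_congr rfl fun w _ => ?_
  rw [Units.coeHom_apply, ← Units.val_pow_eq_pow_val, ← zpow_natCast (t ^ m w), ← zpow_mul]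

/-- `vlo z` is the first variable scaled (with weight `+1`) by `z`. -/
def vlo {n : ℕ} : Fin (n - 1) ⊕ Fin (n - 1) → Fin n ⊕ Fin n
  | Sum.inl k => Sum.inl ⟨(k : ℕ), by have := k.isLt; omega⟩
  | Sum.inr k => Sum.inr ⟨(k : ℕ), by have := k.isLt; omega⟩

/-- `vhi z` is the second variable scaled (with weight `+1`) by `z`. -/
def vhi {n : ℕ} : Fin (n - 1) ⊕ Fin (n - 1) → Fin n ⊕ Fin n
  | Sum.inl k => Sum.inl ⟨(k : ℕ) + 1, by have := k.isLt; omega⟩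
  | Sum.inr k => Sum.inr ⟨(k : ℕ) + 1, by have := k.isLt; omega⟩

/-- The total `posWt`-degree of an exponent vector. -/
def Pp (n : ℕ) (d : (Fin n ⊕ Fin n) →₀ ℕ) (z : Fin (n - 1) ⊕ Fin (n - 1)) : ℤ :=
  (d (vlo z) : ℤ) + (d (vhi z) : ℤ)

lemma posWt_sum (z : Fin (n - 1) ⊕ Fin (n - 1)) (d : (Fin n ⊕ Fin n) →₀ ℕ) :
    ∑ w : Fin n ⊕ Fin n, posWt n z w * (d w : ℤ) = Pp n d z := by
  cases z with
  | inl k =>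
    have hk0 : (k : ℕ) < n := by have := k.isLt; omega
    have hk1 : (k : ℕ) + 1 < n := by have := k.isLt; omega
    rw [Fintype.sum_sum_type]
    have hr : ∑ a : Fin n, posWt n (Sum.inl k) (Sum.inr a) * ((d (Sum.inr a) : ℤ)) = 0 := by
      simp [posWt]
    rw [hr, add_zero]
    have key := sum_ite_pair (b := (⟨(k : ℕ), hk0⟩ : Fin n)) (c := (⟨(k : ℕ) + 1, hk1⟩ : Fin n))
      (Fin.ne_of_val_ne (by simp)) (fun a => (d (Sum.inl a) : ℤ))
    rw [show Pp n d (Sum.inl k) =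
        (fun a : Fin n => (d (Sum.inl a) : ℤ)) ⟨(k : ℕ), hk0⟩ +
        (fun a : Fin n => (d (Sum.inl a) : ℤ)) ⟨(k : ℕ) + 1, hk1⟩ from rfl, ← key]
    refine Finset.sum_congr rfl fun a _ => ?_
    have hpw : posWt n (Sum.inl k) (Sum.inl a) =
        if a = (⟨(k : ℕ), hk0⟩ : Fin n) ∨ a = (⟨(k : ℕ) + 1, hk1⟩ : Fin n) then 1 else 0 := by
      simp only [posWt, Fin.ext_iff]
    rw [hpw, ite_mul, one_mul, zero_mul]
  | inr k =>
    have hk0 : (k : ℕ) < n := by have := k.isLt; omega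
    have hk1 : (k : ℕ) + 1 < n := by have := k.isLt; omega
    rw [Fintype.sum_sum_type]
    have hr : ∑ a : Fin n, posWt n (Sum.inr k) (Sum.inl a) * ((d (Sum.inl a) : ℤ)) = 0 := by
      simp [posWt]
    rw [hr, zero_add]
    have key := sum_ite_pair (b := (⟨(k : ℕ), hk0⟩ : Fin n)) (c := (⟨(k : ℕ) + 1, hk1⟩ : Fin n))
      (Fin.ne_of_val_ne (by simp)) (fun a => (d (Sum.inr a) : ℤ))
    rw [show Pp n d (Sum.inr k) =
        (fun a : Fin n => (d (Sum.inr a) : ℤ)) ⟨(k : ℕ), hk0⟩ +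
        (fun a : Fin n => (d (Sum.inr a) : ℤ)) ⟨(k : ℕ) + 1, hk1⟩ from rfl, ← key]
    refine Finset.sum_congr rfl fun a _ => ?_
    have hpw : posWt n (Sum.inr k) (Sum.inr a) =
        if a = (⟨(k : ℕ), hk0⟩ : Fin n) ∨ a = (⟨(k : ℕ) + 1, hk1⟩ : Fin n) then 1 else 0 := by
      simp only [posWt, Fin.ext_iff]
    rw [hpw, ite_mul, one_mul, zero_mul]

variable (Θ : Fin (n - 1) ⊕ Fin (n - 1) → Fin (n - 1) ⊕ Fin (n - 1))

lemma wt_sum (z : Fin (n - 1) ⊕ Fin (n - 1)) (d : (Fin n ⊕ Fin n) →₀ ℕ) :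
    ∑ w : Fin n ⊕ Fin n, wtTheta n Θ z w * (d w : ℤ) = Pp n d z - Pp n d (Θ z) := by
  simp only [wtTheta, sub_mul]
  rw [Finset.sum_sub_distrib, posWt_sum, posWt_sum]

lemma Pp_dOf_inl (u v : ℕ → ℕ) (i : Fin (n - 1)) :
    Pp n (dOf n u v) (Sum.inl i) = (u ((i : ℕ) + 1) : ℤ) + (u ((i : ℕ) + 2) : ℤ) := rfl

lemma Pp_dOf_inr (u v : ℕ → ℕ) (i : Fin (n - 1)) :
    Pp n (dOf n u v) (Sum.inr i) = (v ((i : ℕ) + 1) : ℤ) + (v ((i : ℕ) + 2) : ℤ) := rfl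

lemma ctrl_iff
    (hsym : ∀ i j : Fin (n - 1),
      (Θ (Sum.inl i) = Sum.inl j ↔ Θ (Sum.inr i) = Sum.inr j) ∧
      (Θ (Sum.inl i) = Sum.inr j ↔ Θ (Sum.inr i) = Sum.inl j))
    (u v : ℕ → ℕ) :
    ctrlEq n Θ u v ↔ ∀ z, Pp n (dOf n u v) z = Pp n (dOf n u v) (Θ z) := by
  constructor
  · intro hC z
    cases z with
    | inl i =>
      cases hθ : Θ (Sum.inl i) with
      | inl j =>
        have h := ((hC i j).2 hθ).1
        rw [Pp_dOf_inl, Pp_dOf_inl]; exact_mod_cast h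
      | inr j =>
        have h := ((hC i j).1 hθ).1
        rw [Pp_dOf_inl, Pp_dOf_inr]; exact_mod_cast h
    | inr i =>
      cases hθ : Θ (Sum.inr i) with
      | inl j =>
        have hθ' : Θ (Sum.inl i) = Sum.inr j := (hsym i j).2.mpr hθ
        have h := ((hC i j).1 hθ').2
        rw [Pp_dOf_inr, Pp_dOf_inl]; exact_mod_cast h.symm
      | inr j =>
        have hθ' : Θ (Sum.inl i) = Sum.inl j := (hsym i j).1.mpr hθ
        have h := ((hC i j).2 hθ').2
        rw [Pp_dOf_inr, Pp_dOf_inr]; exact_mod_cast h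
  · intro hP i j
    refine ⟨fun hθ => ⟨?_, ?_⟩, fun hθ => ⟨?_, ?_⟩⟩
    · have h := hP (Sum.inl i); rw [hθ, Pp_dOf_inl, Pp_dOf_inr] at h; exact_mod_cast h
    · have hθ' : Θ (Sum.inr i) = Sum.inl j := (hsym i j).2.mp hθ
      have h := hP (Sum.inr i); rw [hθ', Pp_dOf_inr, Pp_dOf_inl] at h; exact_mod_cast h.symm
    · have h := hP (Sum.inl i); rw [hθ, Pp_dOf_inl, Pp_dOf_inl] at h; exact_mod_cast h
    · have hθ' : Θ (Sum.inr i) = Sum.inr j := (hsym i j).1.mp hθ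
      have h := hP (Sum.inr i); rw [hθ', Pp_dOf_inr, Pp_dOf_inr] at h; exact_mod_cast h

/-- The submodule of polynomials all of whose monomials lie in `D`. -/
def suppIn (K : Type*) [Field K] (n : ℕ) (D : Set ((Fin n ⊕ Fin n) →₀ ℕ)) :
    Submodule K (MvPolynomial (Fin n ⊕ Fin n) K) where
  carrier := {p | ∀ d ∈ p.support, d ∈ D}
  zero_mem' := by simp
  add_mem' := by
    intro a b ha hb d hd
    rcases Finset.mem_union.mp (support_add hd) with h | h
    exacts [ha d h, hb d h]
  smul_mem' := by
    intro c p hp d hd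
    exact hp d (support_smul hd)

lemma mem_suppIn {D : Set ((Fin n ⊕ Fin n) →₀ ℕ)} {p : MvPolynomial (Fin n ⊕ Fin n) K} :
    p ∈ suppIn K n D ↔ ∀ d ∈ p.support, d ∈ D := Iff.rfl

lemma span_monomials (D : Set ((Fin n ⊕ Fin n) →₀ ℕ)) :
    Submodule.span K {p : MvPolynomial (Fin n ⊕ Fin n) K | ∃ d ∈ D, p = monomial d 1} =
      suppIn K n D := by
  classical
  apply le_antisymm
  · rw [Submodule.span_le]
    rintro p ⟨d, hd, rfl⟩ e he
    rw [support_monomial, if_neg one_ne_zero, Finset.mem_singleton] at he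
    rwa [he]
  · intro p hp
    rw [p.as_sum]
    refine Submodule.sum_mem _ fun d hd => ?_
    have h1 : (monomial d) (coeff d p) = coeff d p • monomial d (1 : K) := by
      rw [smul_monomial, smul_eq_mul, mul_one]
    rw [h1]
    exact Submodule.smul_mem _ _ (Submodule.subset_span ⟨d, hp d hd, rfl⟩)

lemma gen_eq
    (hsym : ∀ i j : Fin (n - 1),
      (Θ (Sum.inl i) = Sum.inl j ↔ Θ (Sum.inr i) = Sum.inr j) ∧
      (Θ (Sum.inl i) = Sum.inr j ↔ Θ (Sum.inr i) = Sum.inl j)) :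
    {p : MvPolynomial (Fin n ⊕ Fin n) K | ∃ u v : ℕ → ℕ, ctrlEq n Θ u v ∧ p = monAB K n u v} =
    {p : MvPolynomial (Fin n ⊕ Fin n) K | ∃ d ∈
        {d : (Fin n ⊕ Fin n) →₀ ℕ |
          ∀ z, ∑ w : Fin n ⊕ Fin n, wtTheta n Θ z w * (d w : ℤ) = 0},
      p = monomial d 1} := by
  ext p
  simp only [Set.mem_setOf_eq]
  constructor
  · rintro ⟨u, v, hC, rfl⟩
    exact ⟨dOf n u v, fun z => by rw [wt_sum, (ctrl_iff Θ hsym u v).mp hC z, sub_self],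
      monAB_eq u v⟩
  · rintro ⟨d, hd, rfl⟩
    set u : ℕ → ℕ := fun m => if h : m - 1 < n then d (Sum.inl ⟨m - 1, h⟩) else 0 with hu
    set v : ℕ → ℕ := fun m => if h : m - 1 < n then d (Sum.inr ⟨m - 1, h⟩) else 0 with hv
    have hdOf : dOf n u v = d := by
      ext w
      cases w with
      | inl i =>
        rw [dOf_inl, hu]
        beta_reduce
        rw [dif_pos (show (i : ℕ) + 1 - 1 < n by have := i.isLt; omega)]
        exact congrArg d (congrArg Sum.inl (Fin.ext (by simp)))
      | inr i =>
        rw [dOf_inr, hv]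
        beta_reduce
        rw [dif_pos (show (i : ℕ) + 1 - 1 < n by have := i.isLt; omega)]
        exact congrArg d (congrArg Sum.inr (Fin.ext (by simp)))
    refine ⟨u, v, ?_, ?_⟩
    · refine (ctrl_iff Θ hsym _ _).mpr fun z => ?_
      rw [hdOf]
      have h := hd z
      rw [wt_sum] at h
      linarith
    · rw [monAB_eq, hdOf]

lemma inv_iff [CharZero K] (p : MvPolynomial (Fin n ⊕ Fin n) K) :
    (∀ (z : Fin (n - 1) ⊕ Fin (n - 1)) (t : Kˣ),
        aeval (R := K)
          (fun w : Fin n ⊕ Fin n =>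
            ((t ^ wtTheta n Θ z w : Kˣ) : K) • (X w : MvPolynomial (Fin n ⊕ Fin n) K)) p = p) ↔
      ∀ d ∈ p.support, ∀ z, ∑ w : Fin n ⊕ Fin n, wtTheta n Θ z w * (d w : ℤ) = 0 := by
  constructor
  · intro h d hd z
    set t : Kˣ := Units.mk0 (2 : K) two_ne_zero with ht
    have h1 := congrArg (coeff d) (h z t)
    rw [coeff_aeval_diag (fun w => ((t ^ wtTheta n Θ z w : Kˣ) : K)), prod_pow_units] at h1
    have hc : coeff d p ≠ 0 := mem_support_iff.mp hd
    have h2 := mul_right_cancel₀ hc (h1.trans (one_mul (coeff d p)).symm)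
    rw [Units.val_zpow_eq_zpow_val, ht, Units.val_mk0] at h2
    exact two_zpow_eq_one h2
  · intro h z t
    apply MvPolynomial.ext
    intro d
    rw [coeff_aeval_diag (fun w => ((t ^ wtTheta n Θ z w : Kˣ) : K)), prod_pow_units]
    by_cases hd : d ∈ p.support
    · rw [h d hd z, zpow_zero, Units.val_one, one_mul]
    · rw [notMem_support_iff.mp hd, mul_zero]

end Aux

/-- Let `K` be a field of characteristic zero and `Θ` a symmetric matching on
`Z(n-1)`. The subring of polynomials invariant under the torus `(Kˣ)^{n-1}` acting
through the orbits of `Θ` (each orbit `{z, Θ z}` acting by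
`X_w ↦ t^{wt z w} • X_w`) equals the matching ring `S(Θ)`. -/
theorem stmt10 (K : Type*) [Field K] [CharZero K] (n : ℕ) (hn : 2 ≤ n)
    (Θ : Fin (n - 1) ⊕ Fin (n - 1) → Fin (n - 1) ⊕ Fin (n - 1))
    (hinv : Function.Involutive Θ) (hnf : ∀ z, Θ z ≠ z)
    (hsym : ∀ i j : Fin (n - 1),
      (Θ (Sum.inl i) = Sum.inl j ↔ Θ (Sum.inr i) = Sum.inr j) ∧
      (Θ (Sum.inl i) = Sum.inr j ↔ Θ (Sum.inr i) = Sum.inl j)) :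
    {p : MvPolynomial (Fin n ⊕ Fin n) K |
        ∀ (z : Fin (n - 1) ⊕ Fin (n - 1)) (t : Kˣ),
          aeval (R := K)
            (fun w : Fin n ⊕ Fin n =>
              ((t ^ wtTheta n Θ z w : Kˣ) : K) • (X w : MvPolynomial (Fin n ⊕ Fin n) K))
            p = p} =
      ↑(controlSpan K n (ctrlEq n Θ)) := by
  classical
  have h2 : controlSpan K n (ctrlEq n Θ) =
      suppIn K n {d : (Fin n ⊕ Fin n) →₀ ℕ |
        ∀ z, ∑ w : Fin n ⊕ Fin n, wtTheta n Θ z w * (d w : ℤ) = 0} := by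
    rw [controlSpan, gen_eq Θ hsym, span_monomials]
  rw [h2]
  ext p
  simp only [Set.mem_setOf_eq, SetLike.mem_coe]
  rw [inv_iff Θ p, mem_suppIn]
  rfl
end

section
/- Let K be a field, n ≥ 3, and let Θ be a symmetric matching on Z(n−1) such that Θ(x_{i−1}) = x_i (hence also Θ(y_{i−1}) = y_i) for some 2 ≤ i ≤ n−1, so that the control equations of Θ include u_{i−1}+u_i = u_i+u_{i+1} and v_{i−1}+v_i = v_i+v_{i+1}. Let Θ′ be the symmetric matching on Z(n−3) obtained by restricting Θ to Z(n−1)∖{x_{i−1},x_i,y_{i−1},y_i} and relabeling indices via the order-preserving bijection {1,…,n−1}∖{i−1,i} → {1,…,n−3}, with S(Θ′) ⊆ K[A_1,…,A_{n−2},B_1,…,B_{n−2}]. Then A_i ∈ S(Θ), B_i ∈ S(Θ), and S(Θ) is isomorphic as a K-algebra to the polynomial ring in two variables S(Θ′)[T_1,T_2] over S(Θ′). -/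
open MvPolynomial

/-- The order-preserving relabeling `{1,…,n-3} → {1,…,n-1} ∖ {i-1, i}` (0-indexed):
`j ↦ j` for `j < i - 2` and `j ↦ j + 2` otherwise. -/
def embF (n i : ℕ) (j : Fin (n - 3)) : Fin (n - 1) :=
  ⟨if (j : ℕ) < i - 2 then (j : ℕ) else (j : ℕ) + 2, by
    have := j.isLt; split <;> omega⟩

section Aux

variable {K : Type*} [Field K]

theorem monAB_mul (n : ℕ) (u v u₂ v₂ : ℕ → ℕ) :
    monAB K n u v * monAB K n u₂ v₂ = monAB K n (u + u₂) (v + v₂) := by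
  unfold monAB
  rw [show ∀ a b c d : MvPolynomial (Fin n ⊕ Fin n) K, a*b*(c*d) = (a*c)*(b*d) by intros; ring]
  rw [← Finset.prod_mul_distrib, ← Finset.prod_mul_distrib]
  simp [pow_add]

theorem monAB_one (n : ℕ) : monAB K n 0 0 = (1 : MvPolynomial (Fin n ⊕ Fin n) K) := by
  simp [monAB]

theorem ctrlEq_add {n : ℕ} {Θ : Fin (n - 1) ⊕ Fin (n - 1) → Fin (n - 1) ⊕ Fin (n - 1)}
    {u v u₂ v₂ : ℕ → ℕ} (h : ctrlEq n Θ u v) (h₂ : ctrlEq n Θ u₂ v₂) :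
    ctrlEq n Θ (u + u₂) (v + v₂) := by
  intro k j
  obtain ⟨h1, h2⟩ := h k j
  obtain ⟨h1', h2'⟩ := h₂ k j
  constructor
  · intro he
    obtain ⟨a, b⟩ := h1 he; obtain ⟨a', b'⟩ := h1' he
    simp only [Pi.add_apply]; omega
  · intro he
    obtain ⟨a, b⟩ := h2 he; obtain ⟨a', b'⟩ := h2' he
    simp only [Pi.add_apply]; omega

theorem ctrlEq_zero (n : ℕ) (Θ : Fin (n - 1) ⊕ Fin (n - 1) → Fin (n - 1) ⊕ Fin (n - 1)) :
    ctrlEq n Θ 0 0 := by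
  intro k j
  exact ⟨fun _ => ⟨rfl, rfl⟩, fun _ => ⟨rfl, rfl⟩⟩

theorem mem_controlSpan {n : ℕ} {E : (ℕ → ℕ) → (ℕ → ℕ) → Prop} {u v : ℕ → ℕ}
    (h : E u v) : monAB K n u v ∈ controlSpan K n E :=
  Submodule.subset_span ⟨u, v, h, rfl⟩

/-- `S(Θ)` as a subalgebra. -/
noncomputable def ctrlAlg (K : Type*) [Field K] (n : ℕ)
    (Θ : Fin (n - 1) ⊕ Fin (n - 1) → Fin (n - 1) ⊕ Fin (n - 1)) :
    Subalgebra K (MvPolynomial (Fin n ⊕ Fin n) K) :=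
  (controlSpan K n (ctrlEq n Θ)).toSubalgebra
    (by rw [← monAB_one n]; exact mem_controlSpan (ctrlEq_zero n Θ))
    (by
      intro x y hx hy
      have : controlSpan K n (ctrlEq n Θ) * controlSpan K n (ctrlEq n Θ) ≤
          controlSpan K n (ctrlEq n Θ) := by
        rw [controlSpan, Submodule.span_mul_span]
        apply Submodule.span_le.2
        rintro p ⟨a, ⟨ua, va, ha, rfl⟩, b, ⟨ub, vb, hb, rfl⟩, rfl⟩
        refine Submodule.subset_span ⟨_, _, ctrlEq_add ha hb, ?_⟩
        show monAB K n ua va * monAB K n ub vb = _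
        exact monAB_mul (K := K) n ua va ub vb
      exact this (Submodule.mul_mem_mul hx hy))

theorem ctrlAlg_coe (n : ℕ) (Θ : Fin (n - 1) ⊕ Fin (n - 1) → Fin (n - 1) ⊕ Fin (n - 1)) :
    (ctrlAlg K n Θ : Set (MvPolynomial (Fin n ⊕ Fin n) K)) = ↑(controlSpan K n (ctrlEq n Θ)) :=
  rfl

theorem mem_ctrlAlg {n : ℕ} {Θ : Fin (n - 1) ⊕ Fin (n - 1) → Fin (n - 1) ⊕ Fin (n - 1)}
    {p : MvPolynomial (Fin n ⊕ Fin n) K} :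
    p ∈ ctrlAlg K n Θ ↔ p ∈ controlSpan K n (ctrlEq n Θ) := Iff.rfl

theorem prod_pow_delta {M : Type*} [CommMonoid M] {n : ℕ} (x : Fin n → M) (j : Fin n) :
    (∏ m : Fin n, x m ^ (if (m : ℕ) + 1 = (j : ℕ) + 1 then 1 else 0)) = x j := by
  rw [Fintype.prod_eq_single j (fun b hb => by
    have : (b : ℕ) + 1 ≠ (j : ℕ) + 1 := fun h => hb (Fin.ext (by omega))
    simp only [this, if_false, pow_zero])]
  simp

/-- A variable as `monAB`. -/
theorem monAB_X_left (n : ℕ) (j : Fin n) :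
    monAB K n (fun m => if m = (j : ℕ) + 1 then 1 else 0) 0 = X (Sum.inl j) := by
  unfold monAB
  rw [prod_pow_delta (fun m : Fin n => (X (Sum.inl m) : MvPolynomial (Fin n ⊕ Fin n) K)) j]
  simp

theorem monAB_X_right (n : ℕ) (j : Fin n) :
    monAB K n 0 (fun m => if m = (j : ℕ) + 1 then 1 else 0) = X (Sum.inr j) := by
  unfold monAB
  rw [prod_pow_delta (fun m : Fin n => (X (Sum.inr m) : MvPolynomial (Fin n ⊕ Fin n) K)) j]
  simp

end Aux
section Aux2

variable {K : Type*} [Field K]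

/-- Extend an exponent vector on `{1,…,n-2}` to `{1,…,n}`, inserting value `a`
at position `i` and duplicating position `i-1` at position `i+1`. -/
def extF (i : ℕ) (u : ℕ → ℕ) (a : ℕ) : ℕ → ℕ := fun m =>
  if m = i then a else if m ≤ i - 1 then u m else u (m - 2)

/-- Restrict an exponent vector on `{1,…,n}` to `{1,…,n-2}`. -/
def resF (i : ℕ) (u : ℕ → ℕ) : ℕ → ℕ := fun m =>
  if m ≤ i - 1 then u m else u (m + 2)

theorem resF_extF (i : ℕ) (hi : 2 ≤ i) (u : ℕ → ℕ) (a : ℕ) : resF i (extF i u a) = u := by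
  funext m
  simp only [resF, extF]
  by_cases h1 : m ≤ i - 1
  · rw [if_pos h1, if_neg (by omega), if_pos h1]
  · rw [if_neg h1, if_neg (by omega), if_neg (by omega), Nat.add_sub_cancel]

theorem extF_resF (i : ℕ) (hi : 2 ≤ i) (u : ℕ → ℕ) (h : u (i + 1) = u (i - 1)) :
    extF i (resF i u) (u i) = u := by
  funext m
  simp only [resF, extF]
  by_cases h1 : m = i
  · rw [if_pos h1, h1]
  · rw [if_neg h1]
    by_cases h2 : m ≤ i - 1
    · rw [if_pos h2, if_pos h2]
    · rw [if_neg h2]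
      by_cases h3 : m - 2 ≤ i - 1
      · rw [if_pos h3, show m - 2 = i - 1 by omega, ← h, show m = i + 1 by omega]
      · rw [if_neg h3]
        congr 1; omega

theorem extF_sum (i : ℕ) (hi : 2 ≤ i) (u' : ℕ → ℕ) (a : ℕ) (c k : ℕ)
    (hk : k = if c < i - 2 then c else c + 2) :
    extF i u' a (k + 1) + extF i u' a (k + 2) = u' (c + 1) + u' (c + 2) := by
  simp only [extF]
  rcases Nat.lt_or_ge c (i - 2) with hc | hc
  · rw [if_pos hc] at hk; subst hk
    rw [if_neg (by omega), if_pos (by omega), if_neg (by omega), if_pos (by omega)]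
  · rw [if_neg (by omega)] at hk; subst hk
    rw [if_neg (by omega), if_neg (by omega), if_neg (by omega), if_neg (by omega),
      show c + 2 + 1 - 2 = c + 1 by omega, show c + 2 + 2 - 2 = c + 2 by omega]

theorem resF_sum (i : ℕ) (hi : 2 ≤ i) (u : ℕ → ℕ)
    (h : u (i - 1) + u i = u i + u (i + 1)) (c k : ℕ)
    (hk : k = if c < i - 2 then c else c + 2) :
    resF i u (c + 1) + resF i u (c + 2) = u (k + 1) + u (k + 2) := by
  have h' : u (i - 1) = u (i + 1) := by omega
  simp only [resF]
  rcases Nat.lt_or_ge c (i - 2) with hc | hc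
  · rw [if_pos hc] at hk; subst hk
    rw [if_pos (by omega), if_pos (by omega)]
  · rw [if_neg (by omega)] at hk; subst hk
    rw [if_neg (show ¬ c + 2 ≤ i - 1 by omega)]
    by_cases h1 : c + 1 ≤ i - 1
    · rw [if_pos h1, show c + 1 = i - 1 by omega, h', show i + 1 = c + 2 + 1 by omega,
        show c + 2 + 2 = c + 2 + 2 from rfl]
    · rw [if_neg h1, show c + 1 + 2 = c + 2 + 1 by omega]

theorem extF_val1 (i : ℕ) (hi : 2 ≤ i) (u' : ℕ → ℕ) (a : ℕ) :
    extF i u' a (i - 1) = u' (i - 1) := by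
  simp only [extF]; rw [if_neg (by omega), if_pos (by omega)]

theorem extF_val2 (i : ℕ) (u' : ℕ → ℕ) (a : ℕ) : extF i u' a i = a := by
  simp [extF]

theorem extF_val3 (i : ℕ) (hi : 2 ≤ i) (u' : ℕ → ℕ) (a : ℕ) :
    extF i u' a (i + 1) = u' (i - 1) := by
  simp only [extF]; rw [if_neg (by omega), if_neg (by omega)]
  congr 1

/-- The order-preserving injection `Fin (n-2) → Fin n` missing `i-1` and `i` (0-indexed). -/
def emb2 (n i : ℕ) (m : Fin (n - 2)) : Fin n :=
  ⟨if (m : ℕ) < i - 1 then (m : ℕ) else (m : ℕ) + 2, by have := m.isLt; split <;> omega⟩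

end Aux2
section Aux3

variable {K : Type*} [Field K]

/-- The substitution sending the small variables into the big ring. -/
noncomputable def sig (K : Type*) [Field K] (n i : ℕ) (h : i < n) :
    Fin (n - 2) ⊕ Fin (n - 2) → MvPolynomial (Fin n ⊕ Fin n) K
  | Sum.inl m => X (Sum.inl (emb2 n i m)) *
      (if (m : ℕ) = i - 2 then X (Sum.inl ⟨i, h⟩) else 1)
  | Sum.inr m => X (Sum.inr (emb2 n i m)) *
      (if (m : ℕ) = i - 2 then X (Sum.inr ⟨i, h⟩) else 1)

/-- Splitting `Fin n` as `Fin (n-2) ⊕ Fin 2`. -/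
def qMap (n i : ℕ) (hn : 3 ≤ n) (hi1 : 2 ≤ i) (hi2 : i ≤ n - 1) :
    Fin (n - 2) ⊕ Fin 2 → Fin n
  | Sum.inl m => emb2 n i m
  | Sum.inr t => if (t : ℕ) = 0 then ⟨i - 1, by omega⟩ else ⟨i, by omega⟩

theorem qMap_bij (n i : ℕ) (hn : 3 ≤ n) (hi1 : 2 ≤ i) (hi2 : i ≤ n - 1) :
    Function.Bijective (qMap n i hn hi1 hi2) := by
  rw [Fintype.bijective_iff_injective_and_card]
  constructor
  · rintro (m | t) (m' | t') h
    · simp only [qMap, emb2, Fin.mk.injEq] at h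
      have hm := m.isLt; have hm' := m'.isLt
      split_ifs at h <;> (exact congrArg Sum.inl (Fin.ext (by omega)))
    · exfalso
      have ht : (t' : ℕ) = 0 ∨ (t' : ℕ) = 1 := by have := t'.isLt; omega
      have hm := m.isLt
      simp only [qMap, emb2, Fin.mk.injEq] at h
      rcases ht with ht | ht <;> rw [ht] at h <;> simp at h <;> split_ifs at h <;> omega
    · exfalso
      have ht : (t : ℕ) = 0 ∨ (t : ℕ) = 1 := by have := t.isLt; omega
      have hm' := m'.isLt
      simp only [qMap, emb2, Fin.mk.injEq] at h
      rcases ht with ht | ht <;> rw [ht] at h <;> simp at h <;> split_ifs at h <;> omega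
    · have ht : (t : ℕ) = 0 ∨ (t : ℕ) = 1 := by have := t.isLt; omega
      have ht' : (t' : ℕ) = 0 ∨ (t' : ℕ) = 1 := by have := t'.isLt; omega
      simp only [qMap, Fin.mk.injEq] at h
      rcases ht with ht | ht <;> rcases ht' with ht' | ht' <;> rw [ht, ht'] at h <;>
        simp at h <;>
        first
        | (exact congrArg Sum.inr (Fin.ext (by omega)))
        | omega
  · simp only [Fintype.card_sum, Fintype.card_fin]
    omega

theorem prod_split (n i : ℕ) (hn : 3 ≤ n) (hi1 : 2 ≤ i) (hi2 : i ≤ n - 1)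
    {M : Type*} [CommMonoid M] (f : Fin n → M) :
    ∏ p : Fin n, f p =
      (∏ m : Fin (n - 2), f (emb2 n i m)) *
        (f ⟨i - 1, by omega⟩ * f ⟨i, by omega⟩) := by
  rw [← Fintype.prod_bijective (qMap n i hn hi1 hi2) (qMap_bij n i hn hi1 hi2)
    (fun z => f (qMap n i hn hi1 hi2 z)) f (fun _ => rfl)]
  rw [Fintype.prod_sum_type]
  congr 1
  rw [Fin.prod_univ_two]
  congr 1

end Aux3
section Aux4

variable {K : Type*} [Field K]

theorem prod_pow_delta' {M : Type*} [CommMonoid M] {n : ℕ} (x : Fin n → M) (j : Fin n) (a : ℕ) :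
    (∏ m : Fin n, x m ^ (if (m : ℕ) + 1 = (j : ℕ) + 1 then a else 0)) = x j ^ a := by
  rw [Fintype.prod_eq_single j (fun b hb => by
    have : (b : ℕ) + 1 ≠ (j : ℕ) + 1 := fun h => hb (Fin.ext (by omega))
    simp only [this, if_false, pow_zero])]
  simp

theorem monAB_pow_left (n : ℕ) (j : Fin n) (a : ℕ) :
    monAB K n (fun m => if m = (j : ℕ) + 1 then a else 0) 0 = X (Sum.inl j) ^ a := by
  unfold monAB
  rw [prod_pow_delta' (fun m : Fin n => (X (Sum.inl m) : MvPolynomial (Fin n ⊕ Fin n) K)) j]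
  simp

theorem monAB_pow_right (n : ℕ) (j : Fin n) (a : ℕ) :
    monAB K n 0 (fun m => if m = (j : ℕ) + 1 then a else 0) = X (Sum.inr j) ^ a := by
  unfold monAB
  rw [prod_pow_delta' (fun m : Fin n => (X (Sum.inr m) : MvPolynomial (Fin n ⊕ Fin n) K)) j]
  simp

theorem monAB_mul_pow (n : ℕ) (u v : ℕ → ℕ) (j : Fin n) (a b : ℕ) :
    monAB K n u v * (X (Sum.inl j) ^ a * X (Sum.inr j) ^ b) =
      monAB K n (u + fun m => if m = (j : ℕ) + 1 then a else 0)
        (v + fun m => if m = (j : ℕ) + 1 then b else 0) := by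
  rw [← monAB_pow_left (K := K) n j a, ← monAB_pow_right (K := K) n j b,
    monAB_mul, monAB_mul]
  congr 1 <;> funext m <;> simp

theorem extF_add_delta (i : ℕ) (hi : 2 ≤ i) (u' : ℕ → ℕ) (a : ℕ) :
    (extF i u' 0 + fun m => if m = i then a else 0) = extF i u' a := by
  funext m
  simp only [Pi.add_apply, extF]
  by_cases h : m = i
  · rw [if_pos h, if_pos h, if_pos h, zero_add]
  · rw [if_neg h, if_neg h, if_neg h, add_zero]

theorem extF_emb2 (i : ℕ) (hi : 2 ≤ i) (u' : ℕ → ℕ) (a : ℕ) (m c : ℕ)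
    (hc : m = if c < i - 1 then c else c + 2) : extF i u' a (m + 1) = u' (c + 1) := by
  simp only [extF]
  rcases Nat.lt_or_ge c (i - 1) with h | h
  · rw [if_pos h] at hc; subst hc
    rw [if_neg (by omega), if_pos (by omega)]
  · rw [if_neg (by omega)] at hc; subst hc
    rw [if_neg (by omega), if_neg (by omega)]
    congr 1

/-- The key computation: `ψ` of a small monomial is a big monomial. -/
theorem aeval_sig_monAB (n i : ℕ) (hn : 3 ≤ n) (hi1 : 2 ≤ i) (hi2 : i ≤ n - 1)
    (h : i < n) (u' v' : ℕ → ℕ) :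
    aeval (sig K n i h) (monAB K (n - 2) u' v') =
      monAB K n (extF i u' 0) (extF i v' 0) := by
  have key : ∀ (w : ℕ → ℕ) (G : Fin n → Fin n ⊕ Fin n) (hG : Function.Injective G),
      (∏ m : Fin (n - 2), ((X (G (emb2 n i m)) : MvPolynomial (Fin n ⊕ Fin n) K) *
          (if (m : ℕ) = i - 2 then X (G ⟨i, h⟩) else 1)) ^ w ((m : ℕ) + 1)) =
        ∏ p : Fin n, X (G p) ^ extF i w 0 ((p : ℕ) + 1) := by
    intro w G hG
    rw [prod_split n i hn hi1 hi2 (fun p => (X (G p) : MvPolynomial (Fin n ⊕ Fin n) K) ^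
      extF i w 0 ((p : ℕ) + 1))]
    simp only [mul_pow]
    rw [Finset.prod_mul_distrib]
    congr 1
    · apply Finset.prod_congr rfl
      intro m _
      congr 1
      exact (extF_emb2 i hi1 w 0 _ (m : ℕ) (by simp [emb2])).symm
    · rw [Fintype.prod_eq_single (⟨i - 2, by omega⟩ : Fin (n - 2)) (fun b hb => by
        have : (b : ℕ) ≠ i - 2 := fun hb' => hb (Fin.ext hb')
        simp only [this, if_false, one_pow])]
      rw [if_pos rfl]
      have e1 : extF i w 0 ((i - 1 : ℕ) + 1) = 0 := by
        rw [show (i - 1 : ℕ) + 1 = i by omega, extF_val2]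
      have e2 : extF i w 0 ((i : ℕ) + 1) = w (i - 2 + 1) := by
        rw [extF_val3 i hi1, show i - 2 + 1 = i - 1 by omega]
      rw [e1, e2, pow_zero, one_mul]
  unfold monAB
  rw [map_mul, map_prod, map_prod]
  simp only [map_pow, aeval_X, sig]
  rw [key u' Sum.inl Sum.inl_injective, key v' Sum.inr Sum.inr_injective]

end Aux4
section Aux5

variable {K : Type*} [Field K]

/-- The retraction substitution. -/
noncomputable def L0 (K : Type*) [Field K] (n i : ℕ) (hn : 3 ≤ n) (hi2 : i ≤ n - 1) :
    Fin n ⊕ Fin n → MvPolynomial (Fin 2) (MvPolynomial (Fin (n - 2) ⊕ Fin (n - 2)) K)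
  | Sum.inl m =>
    if hm : (m : ℕ) < i - 1 then C (X (Sum.inl ⟨(m : ℕ), by omega⟩)) else
    if (m : ℕ) = i - 1 then X 0 else
    if (m : ℕ) = i then 1 else
    C (X (Sum.inl ⟨(m : ℕ) - 2, by have := m.isLt; omega⟩))
  | Sum.inr m =>
    if hm : (m : ℕ) < i - 1 then C (X (Sum.inr ⟨(m : ℕ), by omega⟩)) else
    if (m : ℕ) = i - 1 then X 1 else
    if (m : ℕ) = i then 1 else
    C (X (Sum.inr ⟨(m : ℕ) - 2, by have := m.isLt; omega⟩))

theorem aeval_L0_sig (n i : ℕ) (hn : 3 ≤ n) (hi1 : 2 ≤ i) (hi2 : i ≤ n - 1) (h : i < n)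
    (s : Fin (n - 2) ⊕ Fin (n - 2)) :
    aeval (L0 K n i hn hi2) (sig K n i h s) = C (X s) := by
  have hLi : ∀ G : Fin n ⊕ Fin n → Fin n ⊕ Fin n,
      L0 K n i hn hi2 (Sum.inl ⟨i, h⟩) = 1 := fun _ => by
    simp only [L0]
    rw [dif_neg (by omega), if_neg (by omega)]
    simp
  have hRi : L0 K n i hn hi2 (Sum.inr ⟨i, h⟩) = 1 := by
    simp only [L0]
    rw [dif_neg (by omega), if_neg (by omega)]
    simp
  cases s with
  | inl m =>
    simp only [sig, map_mul, aeval_X]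
    by_cases hm : (m : ℕ) < i - 1
    · have hv : ((emb2 n i m : Fin n) : ℕ) = (m : ℕ) := by simp [emb2, hm]
      by_cases hm2 : (m : ℕ) = i - 2
      · rw [if_pos hm2, aeval_X, hLi id, mul_one]
        simp only [L0]
        rw [dif_pos (by omega : ((emb2 n i m : Fin n) : ℕ) < i - 1)]
        exact congrArg C (congrArg X (congrArg Sum.inl (Fin.ext hv)))
      · rw [if_neg hm2, map_one, mul_one]
        simp only [L0]
        rw [dif_pos (by omega : ((emb2 n i m : Fin n) : ℕ) < i - 1)]
        exact congrArg C (congrArg X (congrArg Sum.inl (Fin.ext hv)))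
    · have hv : ((emb2 n i m : Fin n) : ℕ) = (m : ℕ) + 2 := by simp [emb2, hm]
      have hm2 : (m : ℕ) ≠ i - 2 := by omega
      rw [if_neg hm2, map_one, mul_one]
      simp only [L0]
      rw [dif_neg (by omega), if_neg (by omega), if_neg (by omega)]
      exact congrArg C (congrArg X (congrArg Sum.inl (Fin.ext (by
        show ((emb2 n i m : Fin n) : ℕ) - 2 = (m : ℕ); omega))))
  | inr m =>
    simp only [sig, map_mul, aeval_X]
    by_cases hm : (m : ℕ) < i - 1
    · have hv : ((emb2 n i m : Fin n) : ℕ) = (m : ℕ) := by simp [emb2, hm]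
      by_cases hm2 : (m : ℕ) = i - 2
      · rw [if_pos hm2, aeval_X, hRi, mul_one]
        simp only [L0]
        rw [dif_pos (by omega : ((emb2 n i m : Fin n) : ℕ) < i - 1)]
        exact congrArg C (congrArg X (congrArg Sum.inr (Fin.ext hv)))
      · rw [if_neg hm2, map_one, mul_one]
        simp only [L0]
        rw [dif_pos (by omega : ((emb2 n i m : Fin n) : ℕ) < i - 1)]
        exact congrArg C (congrArg X (congrArg Sum.inr (Fin.ext hv)))
    · have hv : ((emb2 n i m : Fin n) : ℕ) = (m : ℕ) + 2 := by simp [emb2, hm]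
      have hm2 : (m : ℕ) ≠ i - 2 := by omega
      rw [if_neg hm2, map_one, mul_one]
      simp only [L0]
      rw [dif_neg (by omega), if_neg (by omega), if_neg (by omega)]
      exact congrArg C (congrArg X (congrArg Sum.inr (Fin.ext (by
        show ((emb2 n i m : Fin n) : ℕ) - 2 = (m : ℕ); omega))))

end Aux5
section Aux6

variable {K : Type*} [Field K]

set_option maxHeartbeats 2000000 in
set_option synthInstance.maxHeartbeats 400000 in
/-- Main algebraic reduction, assuming the combinatorial transfer facts. -/
theorem mainAux (K : Type*) [Field K] (n i : ℕ) (hn : 3 ≤ n) (hi1 : 2 ≤ i) (hi2 : i ≤ n - 1)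
    (Θ : Fin (n - 1) ⊕ Fin (n - 1) → Fin (n - 1) ⊕ Fin (n - 1))
    (Θ' : Fin (n - 2 - 1) ⊕ Fin (n - 2 - 1) → Fin (n - 2 - 1) ⊕ Fin (n - 2 - 1))
    (hextC : ∀ u' v' (a b : ℕ), ctrlEq (n - 2) Θ' u' v' →
      ctrlEq n Θ (extF i u' a) (extF i v' b))
    (hresC : ∀ u v, ctrlEq n Θ u v → ctrlEq (n - 2) Θ' (resF i u) (resF i v))
    (hspc : ∀ u v, ctrlEq n Θ u v → u (i + 1) = u (i - 1) ∧ v (i + 1) = v (i - 1))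
    (memA : X (Sum.inl (⟨i - 1, by omega⟩ : Fin n)) ∈ controlSpan K n (ctrlEq n Θ))
    (memB : X (Sum.inr (⟨i - 1, by omega⟩ : Fin n)) ∈ controlSpan K n (ctrlEq n Θ)) :
    Nonempty ((ctrlAlg K n Θ) ≃ₐ[K] MvPolynomial (Fin 2) (ctrlAlg K (n - 2) Θ')) := by
  have hilt : i < n := by omega
  set T : Subalgebra K (MvPolynomial (Fin n ⊕ Fin n) K) := ctrlAlg K n Θ with hT
  set T' : Subalgebra K (MvPolynomial (Fin (n - 2) ⊕ Fin (n - 2)) K) :=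
    ctrlAlg K (n - 2) Θ' with hT'
  set ψ : MvPolynomial (Fin (n - 2) ⊕ Fin (n - 2)) K →ₐ[K] MvPolynomial (Fin n ⊕ Fin n) K :=
    aeval (sig K n i hilt) with hψ
  set vals : Fin 2 → MvPolynomial (Fin n ⊕ Fin n) K := fun t =>
    if (t : ℕ) = 0 then X (Sum.inl (⟨i - 1, by omega⟩ : Fin n))
    else X (Sum.inr (⟨i - 1, by omega⟩ : Fin n)) with hvals
  have hv0 : vals 0 = X (Sum.inl (⟨i - 1, by omega⟩ : Fin n)) := by simp [hvals]
  have hv1 : vals 1 = X (Sum.inr (⟨i - 1, by omega⟩ : Fin n)) := by simp [hvals]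
  set Φ : MvPolynomial (Fin 2) T' →ₐ[K] MvPolynomial (Fin n ⊕ Fin n) K :=
    aevalTower (ψ.comp T'.val) vals with hΦ
  set Φbig : MvPolynomial (Fin 2) (MvPolynomial (Fin (n - 2) ⊕ Fin (n - 2)) K) →ₐ[K]
      MvPolynomial (Fin n ⊕ Fin n) K := aevalTower ψ vals with hΦbig
  set Lmap : MvPolynomial (Fin n ⊕ Fin n) K →ₐ[K]
      MvPolynomial (Fin 2) (MvPolynomial (Fin (n - 2) ⊕ Fin (n - 2)) K) :=
    aeval (L0 K n i hn hi2) with hLmap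
  -- the retraction kills ψ
  have hLψ : ∀ p : MvPolynomial (Fin (n - 2) ⊕ Fin (n - 2)) K, Lmap (ψ p) = C p := by
    intro p
    induction p using MvPolynomial.induction_on with
    | C k => rw [hψ, hLmap, aeval_C, AlgHom.commutes]; rfl
    | add p q hp hq => rw [map_add, map_add, hp, hq, map_add]
    | mul_X p s hp =>
      rw [map_mul, map_mul, hp, hψ, aeval_X, hLmap,
        aeval_L0_sig n i hn hi1 hi2 hilt s, ← map_mul]
  have hLvals : ∀ t : Fin 2, Lmap (vals t) = X t := by
    intro t
    by_cases ht : (t : ℕ) = 0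
    · have htt : t = 0 := Fin.ext (by rw [ht, show ((0 : Fin 2) : ℕ) = 0 from rfl])
      subst htt
      rw [hv0, hLmap, aeval_X]
      simp only [L0]
      rw [dif_neg (lt_irrefl (i - 1))]
      simp
    · have htt : t = 1 := Fin.ext (by
        have h2 := t.isLt
        rw [show ((1 : Fin 2) : ℕ) = 1 from rfl]; omega)
      subst htt
      rw [hv1, hLmap, aeval_X]
      simp only [L0]
      rw [dif_neg (lt_irrefl (i - 1))]
      simp
  have hret : ∀ q, Lmap (Φbig q) = q := by
    intro q
    induction q using MvPolynomial.induction_on with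
    | C p => rw [hΦbig, aevalTower_C, hLψ]
    | add p q hp hq => rw [map_add, map_add, hp, hq]
    | mul_X q t hq => rw [map_mul, aevalTower_X, map_mul, hq, hLvals]
  have hΦcomp : ∀ p : MvPolynomial (Fin 2) T',
      Φ p = Φbig (MvPolynomial.map (T'.val : T' →+* _) p) := by
    intro p
    induction p using MvPolynomial.induction_on with
    | C r => rw [hΦ, aevalTower_C, map_C, hΦbig, aevalTower_C]; rfl
    | add p q hp hq => rw [map_add, map_add, map_add, hp, hq]
    | mul_X p t hp => rw [map_mul, map_mul, map_X, map_mul, aevalTower_X, aevalTower_X, hp]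
  have hΦinj : Function.Injective Φ := by
    intro p q hpq
    rw [hΦcomp, hΦcomp] at hpq
    have h2 := congrArg Lmap hpq
    rw [hret, hret] at h2
    exact MvPolynomial.map_injective _ Subtype.val_injective h2
  have hψmem : ∀ x ∈ controlSpan K (n - 2) (ctrlEq (n - 2) Θ'),
      ψ x ∈ controlSpan K n (ctrlEq n Θ) := by
    intro x hx
    induction hx using Submodule.span_induction with
    | mem p hp =>
      obtain ⟨u', v', hE, rfl⟩ := hp
      rw [hψ, aeval_sig_monAB n i hn hi1 hi2 hilt]
      exact mem_controlSpan (hextC u' v' 0 0 hE)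
    | zero => rw [map_zero]; exact Submodule.zero_mem _
    | add x y _ _ hx hy => rw [map_add]; exact Submodule.add_mem _ hx hy
    | smul c x _ hx => rw [map_smul]; exact Submodule.smul_mem _ c hx
  have hrangeT : ∀ p : MvPolynomial (Fin 2) T', Φ p ∈ T := by
    intro p
    induction p using MvPolynomial.induction_on with
    | C r => rw [hΦ, aevalTower_C]; exact hψmem r.val r.2
    | add p q hp hq => rw [map_add]; exact add_mem hp hq
    | mul_X p t hp =>
      rw [map_mul, hΦ, aevalTower_X]
      refine mul_mem hp ?_
      by_cases ht : (t : ℕ) = 0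
      · rw [hvals]; simp only [ht, if_pos]; exact memA
      · rw [hvals]; simp only [ht, if_neg, if_false]; exact memB
  have hTle : ∀ x ∈ controlSpan K n (ctrlEq n Θ), x ∈ Φ.range := by
    intro x hx
    induction hx using Submodule.span_induction with
    | mem p hp =>
      obtain ⟨u, v, hE, rfl⟩ := hp
      have hcomp : Φ ((C (⟨monAB K (n - 2) (resF i u) (resF i v),
          mem_controlSpan (hresC u v hE)⟩ : T')) * ((X 0) ^ (u i) * (X 1) ^ (v i))) =
          monAB K n u v := by
        rw [map_mul, map_mul, map_pow, map_pow, hΦ, aevalTower_C, aevalTower_X, aevalTower_X]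
        have h1 : (ψ.comp T'.val) (⟨monAB K (n - 2) (resF i u) (resF i v),
            mem_controlSpan (hresC u v hE)⟩ : T') =
            ψ (monAB K (n - 2) (resF i u) (resF i v)) := rfl
        rw [h1, hψ, aeval_sig_monAB n i hn hi1 hi2 hilt, hv0, hv1, monAB_mul_pow]
        have hfix : ∀ (w : ℕ → ℕ) (c : ℕ),
            (extF i w 0 + fun m => if m = (i - 1) + 1 then c else 0) = extF i w c := by
          intro w c
          rw [show (i - 1) + 1 = i by omega]
          exact extF_add_delta i hi1 w c
        rw [hfix, hfix, extF_resF i hi1 u (hspc u v hE).1, extF_resF i hi1 v (hspc u v hE).2]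
      exact ⟨_, hcomp⟩
    | zero => exact Subalgebra.zero_mem _
    | add x y _ _ hx hy => exact Subalgebra.add_mem _ hx hy
    | smul c x _ hx => exact Subalgebra.smul_mem _ hx c
  have hrange : Φ.range = T := by
    apply le_antisymm
    · rintro x ⟨p, rfl⟩; exact hrangeT p
    · intro x hx; exact hTle x hx
  exact ⟨(Subalgebra.equivOfEq T Φ.range hrange.symm).trans (AlgEquiv.ofInjective Φ hΦinj).symm⟩

end Aux6
/-- Reduction: if `Θ(x_{i-1}) = x_i` (hence `Θ(y_{i-1}) = y_i`), and `Θ'` is the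
symmetric matching on `Z(n-3)` obtained by restricting `Θ` and relabeling, then
`A_i, B_i ∈ S(Θ)` and `S(Θ)` is isomorphic as a `K`-algebra to the polynomial ring
in two variables over `S(Θ')`. -/
theorem stmt12 (K : Type*) [Field K] (n : ℕ) (hn : 3 ≤ n)
    (i : ℕ) (hi1 : 2 ≤ i) (hi2 : i ≤ n - 1)
    (Θ : Fin (n - 1) ⊕ Fin (n - 1) → Fin (n - 1) ⊕ Fin (n - 1))
    (hinv : Function.Involutive Θ) (hnf : ∀ z, Θ z ≠ z)
    (hsym : ∀ k j : Fin (n - 1),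
      (Θ (Sum.inl k) = Sum.inl j ↔ Θ (Sum.inr k) = Sum.inr j) ∧
      (Θ (Sum.inl k) = Sum.inr j ↔ Θ (Sum.inr k) = Sum.inl j))
    (hΘi : Θ (Sum.inl (⟨i - 2, by omega⟩ : Fin (n - 1))) =
      Sum.inl (⟨i - 1, by omega⟩ : Fin (n - 1)))
    (Θ' : Fin (n - 3) ⊕ Fin (n - 3) → Fin (n - 3) ⊕ Fin (n - 3))
    (hinv' : Function.Involutive Θ') (hnf' : ∀ z, Θ' z ≠ z)
    (hΘ' : ∀ z w : Fin (n - 3) ⊕ Fin (n - 3),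
      Θ' z = w ↔
        Θ (Sum.map (embF n i) (embF n i) z) = Sum.map (embF n i) (embF n i) w) :
    X (Sum.inl (⟨i - 1, by omega⟩ : Fin n)) ∈ controlSpan K n (ctrlEq n Θ) ∧
    X (Sum.inr (⟨i - 1, by omega⟩ : Fin n)) ∈ controlSpan K n (ctrlEq n Θ) ∧
    ∃ (T : Subalgebra K (MvPolynomial (Fin n ⊕ Fin n) K))
      (T' : Subalgebra K (MvPolynomial (Fin (n - 2) ⊕ Fin (n - 2)) K)),
      (T : Set (MvPolynomial (Fin n ⊕ Fin n) K)) = ↑(controlSpan K n (ctrlEq n Θ)) ∧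
      (T' : Set (MvPolynomial (Fin (n - 2) ⊕ Fin (n - 2)) K)) =
        ↑(controlSpan K (n - 2) (ctrlEq (n - 2) Θ')) ∧
      Nonempty (T ≃ₐ[K] MvPolynomial (Fin 2) T') := by
  have hΘxi2 : Θ (Sum.inl (⟨i - 1, by omega⟩ : Fin (n - 1))) = Sum.inl ⟨i - 2, by omega⟩ := by
    have h := hinv (Sum.inl (⟨i - 2, by omega⟩ : Fin (n - 1)))
    rw [hΘi] at h; exact h
  have hΘyi1 : Θ (Sum.inr (⟨i - 2, by omega⟩ : Fin (n - 1))) = Sum.inr ⟨i - 1, by omega⟩ :=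
    ((hsym _ _).1).mp hΘi
  have hΘyi2 : Θ (Sum.inr (⟨i - 1, by omega⟩ : Fin (n - 1))) = Sum.inr ⟨i - 2, by omega⟩ :=
    ((hsym _ _).1).mp hΘxi2
  -- For a cross pair, neither index is special.
  have hk_ne : ∀ k j : Fin (n - 1), Θ (Sum.inl k) = Sum.inr j →
      (k : ℕ) ≠ i - 2 ∧ (k : ℕ) ≠ i - 1 ∧ (j : ℕ) ≠ i - 2 ∧ (j : ℕ) ≠ i - 1 := by
    intro k j he
    refine ⟨fun hv => ?_, fun hv => ?_, fun hv => ?_, fun hv => ?_⟩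
    · rw [show k = ⟨i - 2, by omega⟩ from Fin.ext hv, hΘi] at he; exact Sum.inl_ne_inr he
    · rw [show k = ⟨i - 1, by omega⟩ from Fin.ext hv, hΘxi2] at he; exact Sum.inl_ne_inr he
    · rw [show j = ⟨i - 2, by omega⟩ from Fin.ext hv] at he
      have h2 := congrArg Θ he
      rw [hinv, hΘyi1] at h2
      exact Sum.inl_ne_inr h2
    · rw [show j = ⟨i - 1, by omega⟩ from Fin.ext hv] at he
      have h2 := congrArg Θ he
      rw [hinv, hΘyi2] at h2
      exact Sum.inl_ne_inr h2
  -- For a like pair with nonspecial source, target is nonspecial.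
  have hj_ne : ∀ k j : Fin (n - 1), Θ (Sum.inl k) = Sum.inl j →
      (k : ℕ) ≠ i - 2 → (k : ℕ) ≠ i - 1 → (j : ℕ) ≠ i - 2 ∧ (j : ℕ) ≠ i - 1 := by
    intro k j he h1 h2
    constructor
    · intro hv
      rw [show j = ⟨i - 2, by omega⟩ from Fin.ext hv] at he
      have h3 := congrArg Θ he
      rw [hinv, hΘi] at h3
      exact h2 (congrArg (fun z => Sum.elim Fin.val Fin.val z) h3)
    · intro hv
      rw [show j = ⟨i - 1, by omega⟩ from Fin.ext hv] at he
      have h3 := congrArg Θ he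
      rw [hinv, hΘxi2] at h3
      exact h1 (congrArg (fun z => Sum.elim Fin.val Fin.val z) h3)
  -- Realizing nonspecial indices via embF.
  have hemb : ∀ k : Fin (n - 1), (k : ℕ) ≠ i - 2 → (k : ℕ) ≠ i - 1 →
      ∃ c : Fin (n - 3), embF n i c = k ∧
        ((k : ℕ) = if (c : ℕ) < i - 2 then (c : ℕ) else (c : ℕ) + 2) := by
    intro k h1 h2
    have hlt := k.isLt
    rcases Nat.lt_or_ge (k : ℕ) (i - 2) with h | h
    · refine ⟨⟨(k : ℕ), by omega⟩, Fin.ext ?_, ?_⟩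
      · show (if ((k : ℕ) : ℕ) < i - 2 then ((k : ℕ) : ℕ) else ((k : ℕ) : ℕ) + 2) = (k : ℕ)
        rw [if_pos h]
      · show (k : ℕ) = if ((k : ℕ) : ℕ) < i - 2 then ((k : ℕ) : ℕ) else ((k : ℕ) : ℕ) + 2
        rw [if_pos h]
    · have h' : i ≤ (k : ℕ) := by omega
      refine ⟨⟨(k : ℕ) - 2, by omega⟩, Fin.ext ?_, ?_⟩
      · show (if (k : ℕ) - 2 < i - 2 then (k : ℕ) - 2 else (k : ℕ) - 2 + 2) = (k : ℕ)
        rw [if_neg (by omega)]; omega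
      · show (k : ℕ) = if (k : ℕ) - 2 < i - 2 then (k : ℕ) - 2 else (k : ℕ) - 2 + 2
        rw [if_neg (by omega)]; omega
  -- control equations for the single variables A_i and B_i
  have hΔA : ctrlEq n Θ (fun m => if m = (i - 1) + 1 then 1 else 0) 0 := by
    intro k j
    constructor
    · intro he
      obtain ⟨h1, h2, h3, h4⟩ := hk_ne k j he
      refine ⟨?_, ?_⟩ <;> (beta_reduce; simp only [Pi.zero_apply]; split_ifs <;> omega)
    · intro he
      by_cases hv : (k : ℕ) = i - 2
      · have hj : (j : ℕ) = i - 1 := by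
          rw [show k = ⟨i - 2, by omega⟩ from Fin.ext hv, hΘi] at he
          exact (congrArg Fin.val (Sum.inl_injective he)).symm
        exact ⟨by beta_reduce; split_ifs <;> omega, rfl⟩
      · by_cases hv2 : (k : ℕ) = i - 1
        · have hj : (j : ℕ) = i - 2 := by
            rw [show k = ⟨i - 1, by omega⟩ from Fin.ext hv2, hΘxi2] at he
            exact (congrArg Fin.val (Sum.inl_injective he)).symm
          exact ⟨by beta_reduce; split_ifs <;> omega, rfl⟩
        · obtain ⟨h3, h4⟩ := hj_ne k j he hv hv2
          exact ⟨by beta_reduce; split_ifs <;> omega, rfl⟩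
  have hΔB : ctrlEq n Θ 0 (fun m => if m = (i - 1) + 1 then 1 else 0) := by
    intro k j
    constructor
    · intro he
      obtain ⟨h1, h2, h3, h4⟩ := hk_ne k j he
      refine ⟨?_, ?_⟩ <;> (beta_reduce; simp only [Pi.zero_apply]; split_ifs <;> omega)
    · intro he
      by_cases hv : (k : ℕ) = i - 2
      · have hj : (j : ℕ) = i - 1 := by
          rw [show k = ⟨i - 2, by omega⟩ from Fin.ext hv, hΘi] at he
          exact (congrArg Fin.val (Sum.inl_injective he)).symm
        exact ⟨rfl, by beta_reduce; split_ifs <;> omega⟩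
      · by_cases hv2 : (k : ℕ) = i - 1
        · have hj : (j : ℕ) = i - 2 := by
            rw [show k = ⟨i - 1, by omega⟩ from Fin.ext hv2, hΘxi2] at he
            exact (congrArg Fin.val (Sum.inl_injective he)).symm
          exact ⟨rfl, by beta_reduce; split_ifs <;> omega⟩
        · obtain ⟨h3, h4⟩ := hj_ne k j he hv hv2
          exact ⟨rfl, by beta_reduce; split_ifs <;> omega⟩
  have memA : X (Sum.inl (⟨i - 1, by omega⟩ : Fin n)) ∈ controlSpan K n (ctrlEq n Θ) := by
    rw [← monAB_X_left (K := K) n ⟨i - 1, by omega⟩]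
    exact mem_controlSpan hΔA
  have memB : X (Sum.inr (⟨i - 1, by omega⟩ : Fin n)) ∈ controlSpan K n (ctrlEq n Θ) := by
    rw [← monAB_X_right (K := K) n ⟨i - 1, by omega⟩]
    exact mem_controlSpan hΔB
  -- the special control equation
  have hsp : ∀ u v : ℕ → ℕ, ctrlEq n Θ u v →
      u (i + 1) = u (i - 1) ∧ v (i + 1) = v (i - 1) := by
    intro u v hE
    have h := (hE ⟨i - 2, by omega⟩ ⟨i - 1, by omega⟩).2 hΘi
    have h1 : u (i - 2 + 1) + u (i - 2 + 2) = u (i - 1 + 1) + u (i - 1 + 2) := h.1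
    have h2 : v (i - 2 + 1) + v (i - 2 + 2) = v (i - 1 + 1) + v (i - 1 + 2) := h.2
    rw [show i - 2 + 1 = i - 1 by omega, show i - 2 + 2 = i by omega,
      show i - 1 + 1 = i by omega, show i - 1 + 2 = i + 1 by omega] at h1 h2
    exact ⟨by omega, by omega⟩
  -- transfer of control equations along extension
  have hextC : ∀ (u' v' : ℕ → ℕ) (a b : ℕ), ctrlEq (n - 2) Θ' u' v' →
      ctrlEq n Θ (extF i u' a) (extF i v' b) := by
    intro u' v' a b hE k j
    constructor
    · intro he
      obtain ⟨h1, h2, h3, h4⟩ := hk_ne k j he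
      obtain ⟨ck, hck, hckv⟩ := hemb k h1 h2
      obtain ⟨cj, hcj, hcjv⟩ := hemb j h3 h4
      have hth : Θ' (Sum.inl ck) = Sum.inr cj := by
        rw [hΘ' (Sum.inl ck) (Sum.inr cj)]
        simp only [Sum.map_inl, Sum.map_inr]
        rw [hck, hcj]; exact he
      have hE' := (hE ck cj).1 hth
      constructor
      · rw [extF_sum i hi1 u' a (ck : ℕ) (k : ℕ) hckv,
          extF_sum i hi1 v' b (cj : ℕ) (j : ℕ) hcjv]
        exact hE'.1
      · rw [extF_sum i hi1 u' a (cj : ℕ) (j : ℕ) hcjv,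
          extF_sum i hi1 v' b (ck : ℕ) (k : ℕ) hckv]
        exact hE'.2
    · intro he
      by_cases hv : (k : ℕ) = i - 2
      · have hj : (j : ℕ) = i - 1 := by
          rw [show k = ⟨i - 2, by omega⟩ from Fin.ext hv, hΘi] at he
          exact (congrArg Fin.val (Sum.inl_injective he)).symm
        rw [hv, hj, show i - 2 + 1 = i - 1 by omega, show i - 2 + 2 = i by omega,
          show i - 1 + 1 = i by omega, show i - 1 + 2 = i + 1 by omega]
        simp only [extF_val1 i hi1, extF_val2, extF_val3 i hi1]
        exact ⟨add_comm _ _, add_comm _ _⟩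
      · by_cases hv2 : (k : ℕ) = i - 1
        · have hj : (j : ℕ) = i - 2 := by
            rw [show k = ⟨i - 1, by omega⟩ from Fin.ext hv2, hΘxi2] at he
            exact (congrArg Fin.val (Sum.inl_injective he)).symm
          rw [hv2, hj, show i - 1 + 1 = i by omega, show i - 1 + 2 = i + 1 by omega,
            show i - 2 + 1 = i - 1 by omega, show i - 2 + 2 = i by omega]
          simp only [extF_val1 i hi1, extF_val2, extF_val3 i hi1]
          exact ⟨add_comm _ _, add_comm _ _⟩
        · obtain ⟨h3, h4⟩ := hj_ne k j he hv hv2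
          obtain ⟨ck, hck, hckv⟩ := hemb k hv hv2
          obtain ⟨cj, hcj, hcjv⟩ := hemb j h3 h4
          have hth : Θ' (Sum.inl ck) = Sum.inl cj := by
            rw [hΘ' (Sum.inl ck) (Sum.inl cj)]
            simp only [Sum.map_inl]
            rw [hck, hcj]; exact he
          have hE' := (hE ck cj).2 hth
          constructor
          · rw [extF_sum i hi1 u' a (ck : ℕ) (k : ℕ) hckv,
              extF_sum i hi1 u' a (cj : ℕ) (j : ℕ) hcjv]
            exact hE'.1
          · rw [extF_sum i hi1 v' b (ck : ℕ) (k : ℕ) hckv,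
              extF_sum i hi1 v' b (cj : ℕ) (j : ℕ) hcjv]
            exact hE'.2
  -- transfer of control equations along restriction
  have hresC : ∀ u v, ctrlEq n Θ u v → ctrlEq (n - 2) Θ' (resF i u) (resF i v) := by
    intro u v hE k0 j0
    have hspu : u (i - 1) + u i = u i + u (i + 1) := by
      have := (hsp u v hE).1; omega
    have hspv : v (i - 1) + v i = v i + v (i + 1) := by
      have := (hsp u v hE).2; omega
    constructor
    · intro he'
      have he := (hΘ' (Sum.inl k0) (Sum.inr j0)).1 he'
      simp only [Sum.map_inl, Sum.map_inr] at he
      have hE' := (hE (embF n i k0) (embF n i j0)).1 he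
      constructor
      · rw [resF_sum i hi1 u hspu (k0 : ℕ) ((embF n i k0 : Fin (n - 1)) : ℕ) rfl,
          resF_sum i hi1 v hspv (j0 : ℕ) ((embF n i j0 : Fin (n - 1)) : ℕ) rfl]
        exact hE'.1
      · rw [resF_sum i hi1 u hspu (j0 : ℕ) ((embF n i j0 : Fin (n - 1)) : ℕ) rfl,
          resF_sum i hi1 v hspv (k0 : ℕ) ((embF n i k0 : Fin (n - 1)) : ℕ) rfl]
        exact hE'.2
    · intro he'
      have he := (hΘ' (Sum.inl k0) (Sum.inl j0)).1 he'
      simp only [Sum.map_inl] at he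
      have hE' := (hE (embF n i k0) (embF n i j0)).2 he
      constructor
      · rw [resF_sum i hi1 u hspu (k0 : ℕ) ((embF n i k0 : Fin (n - 1)) : ℕ) rfl,
          resF_sum i hi1 u hspu (j0 : ℕ) ((embF n i j0 : Fin (n - 1)) : ℕ) rfl]
        exact hE'.1
      · rw [resF_sum i hi1 v hspv (k0 : ℕ) ((embF n i k0 : Fin (n - 1)) : ℕ) rfl,
          resF_sum i hi1 v hspv (j0 : ℕ) ((embF n i j0 : Fin (n - 1)) : ℕ) rfl]
        exact hE'.2
  exact ⟨memA, memB, ctrlAlg K n Θ, ctrlAlg K (n - 2) Θ', rfl, rfl,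
    mainAux K n i hn hi1 hi2 Θ Θ' hextC hresC hsp memA memB⟩
end

section
/- Let K be a field and S = K[A_1,…,A_6,B_1,…,B_6]. Let S(Θ) be the K-span of the monomials A_1^{u_1}⋯A_6^{u_6}B_1^{v_1}⋯B_6^{v_6} satisfying u_1+u_2 = u_4+u_5, v_1+v_2 = v_4+v_5, u_2+u_3 = v_2+v_3, u_3+u_4 = v_3+v_4, u_5+u_6 = v_5+v_6 (the matching Θ(x_1)=x_4, Θ(y_1)=y_4, Θ(x_2)=y_2, Θ(x_3)=y_3, Θ(x_5)=y_5 for n = 6). Then S(Θ) is generated as a K-algebra by X_1 = A_3B_3, X_2 = A_6B_6, Y_1 = A_1A_5B_6, Y_2 = A_2A_4B_3, Y_3 = A_3B_2B_4, Y_4 = A_6B_1B_5, Z_1 = A_1A_4B_1B_4, Z_2 = A_1A_5B_1B_5, Z_3 = A_2A_4B_2B_4, Z_4 = A_2A_5B_2B_5, and the kernel of the K-algebra homomorphism from the polynomial ring in 10 variables onto S(Θ) sending the variables to these generators is generated by the three elements Y_1Y_4 − X_2Z_2, Y_2Y_3 − X_1Z_3, Z_1Z_4 − Z_2Z_3 (written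 in the corresponding polynomial variables); so S(Θ) is a complete intersection of codimension 3. -/
open MvPolynomial

-- ===== auxiliary development =====

noncomputable section Stmt17Aux

section VecHelp
variable {α : Type*} {M : Type*} [AddCommMonoid M]

lemma cv5 (a0 a1 a2 a3 a4 a5 a6 a7 a8 a9 : α) :
    ![a0,a1,a2,a3,a4,a5,a6,a7,a8,a9] (5 : Fin 10) = a5 := rfl
lemma cv6 (a0 a1 a2 a3 a4 a5 a6 a7 a8 a9 : α) :
    ![a0,a1,a2,a3,a4,a5,a6,a7,a8,a9] (6 : Fin 10) = a6 := rfl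
lemma cv7 (a0 a1 a2 a3 a4 a5 a6 a7 a8 a9 : α) :
    ![a0,a1,a2,a3,a4,a5,a6,a7,a8,a9] (7 : Fin 10) = a7 := rfl
lemma cv8 (a0 a1 a2 a3 a4 a5 a6 a7 a8 a9 : α) :
    ![a0,a1,a2,a3,a4,a5,a6,a7,a8,a9] (8 : Fin 10) = a8 := rfl
lemma cv9 (a0 a1 a2 a3 a4 a5 a6 a7 a8 a9 : α) :
    ![a0,a1,a2,a3,a4,a5,a6,a7,a8,a9] (9 : Fin 10) = a9 := rfl
lemma cw5 (a0 a1 a2 a3 a4 a5 : α) :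
    ![a0,a1,a2,a3,a4,a5] (5 : Fin 6) = a5 := rfl

lemma sum_univ_ten (f : Fin 10 → M) :
    ∑ j, f j = f 0 + f 1 + f 2 + f 3 + f 4 + f 5 + f 6 + f 7 + f 8 + f 9 := by
  simp [Fin.sum_univ_succ, add_assoc]

end VecHelp

variable (K : Type*) [Field K]

/-- The ten generators, in order. -/
def gv17 : Fin 10 → MvPolynomial (Fin 6 ⊕ Fin 6) K :=
  ![X (Sum.inl 2) * X (Sum.inr 2), X (Sum.inl 5) * X (Sum.inr 5),
    X (Sum.inl 0) * X (Sum.inl 4) * X (Sum.inr 5), X (Sum.inl 1) * X (Sum.inl 3) * X (Sum.inr 2),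
    X (Sum.inl 2) * X (Sum.inr 1) * X (Sum.inr 3), X (Sum.inl 5) * X (Sum.inr 0) * X (Sum.inr 4),
    X (Sum.inl 0) * X (Sum.inl 3) * X (Sum.inr 0) * X (Sum.inr 3),
    X (Sum.inl 0) * X (Sum.inl 4) * X (Sum.inr 0) * X (Sum.inr 4),
    X (Sum.inl 1) * X (Sum.inl 3) * X (Sum.inr 1) * X (Sum.inr 3),
    X (Sum.inl 1) * X (Sum.inl 4) * X (Sum.inr 1) * X (Sum.inr 4)]

/-- exponent vector of the `j`-th generator -/
def wgt17 : Fin 10 → (Fin 6 ⊕ Fin 6 →₀ ℕ) :=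
  ![.single (.inl 2) 1 + .single (.inr 2) 1,
    .single (.inl 5) 1 + .single (.inr 5) 1,
    .single (.inl 0) 1 + .single (.inl 4) 1 + .single (.inr 5) 1,
    .single (.inl 1) 1 + .single (.inl 3) 1 + .single (.inr 2) 1,
    .single (.inl 2) 1 + .single (.inr 1) 1 + .single (.inr 3) 1,
    .single (.inl 5) 1 + .single (.inr 0) 1 + .single (.inr 4) 1,
    .single (.inl 0) 1 + .single (.inl 3) 1 + .single (.inr 0) 1 + .single (.inr 3) 1,
    .single (.inl 0) 1 + .single (.inl 4) 1 + .single (.inr 0) 1 + .single (.inr 4) 1,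
    .single (.inl 1) 1 + .single (.inl 3) 1 + .single (.inr 1) 1 + .single (.inr 3) 1,
    .single (.inl 1) 1 + .single (.inl 4) 1 + .single (.inr 1) 1 + .single (.inr 4) 1]

lemma gv17_eq (j : Fin 10) : gv17 K j = monomial (wgt17 j) 1 := by
  fin_cases j <;>
    simp [gv17, wgt17, X, monomial_mul, add_assoc, cv5, cv6, cv7, cv8, cv9]

/-- the image exponent vector of a monomial in the 10 variables -/
def psi17 (d : Fin 10 →₀ ℕ) : Fin 6 ⊕ Fin 6 →₀ ℕ :=
  Finsupp.equivFunOnFinite.symm (Sum.elim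
    ![d 2 + d 6 + d 7, d 3 + d 8 + d 9, d 0 + d 4, d 3 + d 6 + d 8, d 2 + d 7 + d 9, d 1 + d 5]
    ![d 5 + d 6 + d 7, d 4 + d 8 + d 9, d 0 + d 3, d 4 + d 6 + d 8, d 5 + d 7 + d 9, d 1 + d 2])

lemma sum_wgt17 (d : Fin 10 →₀ ℕ) : ∑ j : Fin 10, d j • wgt17 j = psi17 d := by
  rw [sum_univ_ten]
  ext x
  rcases x with k | k <;> fin_cases k <;>
    simp [wgt17, psi17, Finsupp.single_apply, cv5, cv6, cv7, cv8, cv9, cw5] <;> ring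

lemma prod_monomial17 (f : Fin 10 → (Fin 6 ⊕ Fin 6 →₀ ℕ)) :
    (∏ j : Fin 10, (monomial (f j) (1 : K))) = monomial (∑ j : Fin 10, f j) 1 := by
  classical
  induction (Finset.univ : Finset (Fin 10)) using Finset.induction_on with
  | empty => simp [monomial_zero']
  | insert h ih => simp_all [monomial_mul]

lemma aeval_gv_monomial (d : Fin 10 →₀ ℕ) (c : K) :
    aeval (gv17 K) (monomial d c) = monomial (psi17 d) c := by
  rw [aeval_monomial, Finsupp.prod_fintype _ _ (fun i => pow_zero _)]
  simp_rw [gv17_eq, monomial_pow, one_pow, prod_monomial17, sum_wgt17]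
  rw [algebraMap_eq, C_mul_monomial, mul_one]


/-- The ideal of the three relations. -/
def rid17 : Ideal (MvPolynomial (Fin 10) K) :=
  Ideal.span {X 2 * X 5 - X 1 * X 7, X 3 * X 4 - X 0 * X 8, X 6 * X 9 - X 7 * X 8}

def Normal17 (d : Fin 10 →₀ ℕ) : Prop :=
  min (d 2) (d 5) = 0 ∧ min (d 3) (d 4) = 0 ∧ min (d 6) (d 9) = 0

/-- normal form of an exponent vector -/
def nfF17 (d : Fin 10 →₀ ℕ) : Fin 10 →₀ ℕ :=
  Finsupp.equivFunOnFinite.symm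
    ![d 0 + min (d 3) (d 4), d 1 + min (d 2) (d 5),
      d 2 - min (d 2) (d 5), d 3 - min (d 3) (d 4), d 4 - min (d 3) (d 4),
      d 5 - min (d 2) (d 5), d 6 - min (d 6) (d 9),
      d 7 + min (d 2) (d 5) + min (d 6) (d 9),
      d 8 + min (d 3) (d 4) + min (d 6) (d 9), d 9 - min (d 6) (d 9)]

/-- the part of `d` untouched by the rewriting -/
def restF17 (d : Fin 10 →₀ ℕ) : Fin 10 →₀ ℕ :=
  Finsupp.equivFunOnFinite.symm
    ![d 0, d 1, d 2 - min (d 2) (d 5), d 3 - min (d 3) (d 4), d 4 - min (d 3) (d 4),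
      d 5 - min (d 2) (d 5), d 6 - min (d 6) (d 9), d 7, d 8, d 9 - min (d 6) (d 9)]

lemma nfF17_normal (d : Fin 10 →₀ ℕ) : Normal17 (nfF17 d) := by
  refine ⟨?_, ?_, ?_⟩ <;>
    simp [nfF17, Normal17, cv5, cv6, cv7, cv8, cv9] <;> omega

lemma fac_d (d : Fin 10 →₀ ℕ) :
    d = restF17 d + (Finsupp.single 2 (min (d 2) (d 5)) + Finsupp.single 5 (min (d 2) (d 5))) +
        (Finsupp.single 3 (min (d 3) (d 4)) + Finsupp.single 4 (min (d 3) (d 4))) +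
        (Finsupp.single 6 (min (d 6) (d 9)) + Finsupp.single 9 (min (d 6) (d 9))) := by
  refine DFunLike.ext _ _ fun j => ?_
  simp only [Finsupp.coe_add, Pi.add_apply, Finsupp.single_apply]
  fin_cases j <;>
    simp [restF17, Finsupp.single_apply, cv5, cv6, cv7, cv8, cv9] <;> omega

lemma fac_nf (d : Fin 10 →₀ ℕ) :
    nfF17 d = restF17 d +
        (Finsupp.single 1 (min (d 2) (d 5)) + Finsupp.single 7 (min (d 2) (d 5))) +
        (Finsupp.single 0 (min (d 3) (d 4)) + Finsupp.single 8 (min (d 3) (d 4))) +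
        (Finsupp.single 7 (min (d 6) (d 9)) + Finsupp.single 8 (min (d 6) (d 9))) := by
  refine DFunLike.ext _ _ fun j => ?_
  simp only [Finsupp.coe_add, Pi.add_apply, Finsupp.single_apply]
  fin_cases j <;>
    simp [nfF17, restF17, Finsupp.single_apply, cv5, cv6, cv7, cv8, cv9] <;> omega

lemma monomial_fac (d : Fin 10 →₀ ℕ) :
    monomial d (1 : K) =
      monomial (restF17 d) 1 * (X 2 * X 5) ^ min (d 2) (d 5) *
        (X 3 * X 4) ^ min (d 3) (d 4) * (X 6 * X 9) ^ min (d 6) (d 9) := by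
  conv_lhs => rw [fac_d d]
  simp only [mul_pow, X_pow_eq_monomial, monomial_mul, mul_one, one_mul]

lemma monomial_fac_nf (d : Fin 10 →₀ ℕ) :
    monomial (nfF17 d) (1 : K) =
      monomial (restF17 d) 1 * (X 1 * X 7) ^ min (d 2) (d 5) *
        (X 0 * X 8) ^ min (d 3) (d 4) * (X 7 * X 8) ^ min (d 6) (d 9) := by
  conv_lhs => rw [fac_nf d]
  simp only [mul_pow, X_pow_eq_monomial, monomial_mul, mul_one, one_mul]

lemma quot_nf (d : Fin 10 →₀ ℕ) :
    monomial d (1 : K) - monomial (nfF17 d) 1 ∈ rid17 K := by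
  rw [← Ideal.Quotient.eq]
  have h1 : Ideal.Quotient.mk (rid17 K) (X 2 * X 5) = Ideal.Quotient.mk (rid17 K) (X 1 * X 7) :=
    Ideal.Quotient.eq.mpr (Ideal.subset_span (by simp))
  have h2 : Ideal.Quotient.mk (rid17 K) (X 3 * X 4) = Ideal.Quotient.mk (rid17 K) (X 0 * X 8) :=
    Ideal.Quotient.eq.mpr (Ideal.subset_span (by simp))
  have h3 : Ideal.Quotient.mk (rid17 K) (X 6 * X 9) = Ideal.Quotient.mk (rid17 K) (X 7 * X 8) :=
    Ideal.Quotient.eq.mpr (Ideal.subset_span (by simp))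
  rw [monomial_fac, monomial_fac_nf]
  simp only [map_mul, map_pow, h1, h2, h3]


lemma psi17_inj {d d' : Fin 10 →₀ ℕ} (h : Normal17 d) (h' : Normal17 d')
    (he : psi17 d = psi17 d') : d = d' := by
  obtain ⟨h1, h2, h3⟩ := h
  obtain ⟨h1', h2', h3'⟩ := h'
  have E : ∀ x, psi17 d x = psi17 d' x := fun x => by rw [he]
  have e1 := E (Sum.inl 0); have e2 := E (Sum.inl 1); have e3 := E (Sum.inl 2)
  have e4 := E (Sum.inl 3); have e5 := E (Sum.inl 4); have e6 := E (Sum.inl 5)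
  have f1 := E (Sum.inr 0); have f2 := E (Sum.inr 1); have f3 := E (Sum.inr 2)
  have f4 := E (Sum.inr 3); have f5 := E (Sum.inr 4); have f6 := E (Sum.inr 5)
  simp [psi17, cw5] at e1 e2 e3 e4 e5 e6 f1 f2 f3 f4 f5 f6
  have g0 : d 0 = d' 0 := by omega
  have g1 : d 1 = d' 1 := by omega
  have g2 : d 2 = d' 2 := by omega
  have g3 : d 3 = d' 3 := by omega
  have g4 : d 4 = d' 4 := by omega
  have g5 : d 5 = d' 5 := by omega
  have g6 : d 6 = d' 6 := by omega
  have g7 : d 7 = d' 7 := by omega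
  have g8 : d 8 = d' 8 := by omega
  have g9 : d 9 = d' 9 := by omega
  exact DFunLike.ext _ _ fun j => by fin_cases j <;> assumption

lemma normal_inj17 (K : Type*) [Field K] (g : MvPolynomial (Fin 10) K)
    (hn : ∀ d ∈ g.support, Normal17 d) (hz : aeval (gv17 K) g = 0) : g = 0 := by
  by_contra hg
  obtain ⟨d0, hd0⟩ := Finset.nonempty_of_ne_empty (fun hsupp => hg (by
    rwa [← MvPolynomial.support_eq_empty]))
  have hrep : aeval (gv17 K) g = ∑ d ∈ g.support, monomial (psi17 d) (coeff d g) := by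
    conv_lhs => rw [← support_sum_monomial_coeff g]
    rw [map_sum]
    exact Finset.sum_congr rfl fun d _ => aeval_gv_monomial K d (coeff d g)
  have hcoeff : coeff (psi17 d0) (aeval (gv17 K) g) = coeff d0 g := by
    rw [hrep, coeff_sum]
    rw [Finset.sum_eq_single d0]
    · simp [coeff_monomial]
    · intro d hd hne
      rw [coeff_monomial, if_neg]
      intro hps
      exact hne (psi17_inj (hn d hd) (hn d0 hd0) hps)
    · intro hd; exact absurd hd0 hd
  rw [hz] at hcoeff
  simp only [coeff_zero] at hcoeff
  exact (MvPolynomial.mem_support_iff.mp hd0) hcoeff.symm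


lemma rid17_le_ker :
    rid17 K ≤ RingHom.ker (aeval (gv17 K) : MvPolynomial (Fin 10) K →ₐ[K] _) := by
  rw [rid17, Ideal.span_le]
  intro r hr
  simp only [Set.mem_insert_iff, Set.mem_singleton_iff] at hr
  rcases hr with rfl | rfl | rfl <;>
    · simp only [SetLike.mem_coe, RingHom.mem_ker, map_sub, map_mul, aeval_X, gv17,
        Matrix.cons_val_zero, Matrix.cons_val_one, Matrix.head_cons, Matrix.cons_val_two,
        Matrix.cons_val_three, Matrix.cons_val_four, Matrix.tail_cons, cv5, cv6, cv7, cv8, cv9]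
      ring

lemma aeval_rels17 (r : MvPolynomial (Fin 10) K) (hr : r ∈ rid17 K) :
    aeval (gv17 K) r = 0 :=
  RingHom.mem_ker.mp (rid17_le_ker K hr)

lemma ker_le_rid17 (f : MvPolynomial (Fin 10) K) (hf : aeval (gv17 K) f = 0) :
    f ∈ rid17 K := by
  classical
  set Nf : MvPolynomial (Fin 10) K :=
    ∑ d ∈ f.support, monomial (nfF17 d) (coeff d f) with hNf
  have hsub : f - Nf ∈ rid17 K := by
    have hfe : f - Nf = ∑ d ∈ f.support,
        ((monomial d) (coeff d f) - (monomial (nfF17 d)) (coeff d f)) := by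
      rw [Finset.sum_sub_distrib, support_sum_monomial_coeff f, hNf]
    rw [hfe]
    refine Submodule.sum_mem _ fun d _ => ?_
    have : (monomial d) (coeff d f) - (monomial (nfF17 d)) (coeff d f) =
        C (coeff d f) * (monomial d 1 - monomial (nfF17 d) 1) := by
      simp [mul_sub, C_mul_monomial]
    rw [this]
    exact Ideal.mul_mem_left _ _ (quot_nf K d)
  have hNf0 : aeval (gv17 K) Nf = 0 := by
    have := aeval_rels17 K _ hsub
    rw [map_sub, hf, zero_sub, neg_eq_zero] at this
    exact this
  have hnorm : ∀ d ∈ Nf.support, Normal17 d := by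
    intro d hd
    have := MvPolynomial.support_sum hd
    simp only [Finset.mem_biUnion] at this
    obtain ⟨d', _, hd'⟩ := this
    have := support_monomial_subset hd'
    simp only [Finset.mem_singleton] at this
    subst this
    exact nfF17_normal d'
  have : Nf = 0 := normal_inj17 K Nf hnorm hNf0
  rw [this, sub_zero] at hsub
  exact hsub



lemma monAB_mul_s17 (u v u' v' : ℕ → ℕ) :
    monAB K 6 u v * monAB K 6 u' v' =
      monAB K 6 (fun i => u i + u' i) (fun i => v i + v' i) := by
  simp only [monAB, pow_add, Finset.prod_mul_distrib]
  ring

lemma monAB_one_s17 : monAB K 6 (fun _ => 0) (fun _ => 0) = 1 := by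
  simp [monAB]

/-- The decomposition identity: if the twelve exponent equations hold, the
monomial is the corresponding product of the ten generators. -/
lemma monAB_decomp (u v : ℕ → ℕ) (e : Fin 10 → ℕ)
    (h1 : u 1 = e 2 + e 6 + e 7) (h2 : u 2 = e 3 + e 8 + e 9) (h3 : u 3 = e 0 + e 4)
    (h4 : u 4 = e 3 + e 6 + e 8) (h5 : u 5 = e 2 + e 7 + e 9) (h6 : u 6 = e 1 + e 5)
    (g1 : v 1 = e 5 + e 6 + e 7) (g2 : v 2 = e 4 + e 8 + e 9) (g3 : v 3 = e 0 + e 3)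
    (g4 : v 4 = e 4 + e 6 + e 8) (g5 : v 5 = e 5 + e 7 + e 9) (g6 : v 6 = e 1 + e 2) :
    monAB K 6 u v =
      (gv17 K 0) ^ e 0 * (gv17 K 1) ^ e 1 * (gv17 K 2) ^ e 2 * (gv17 K 3) ^ e 3 *
      (gv17 K 4) ^ e 4 * (gv17 K 5) ^ e 5 * (gv17 K 6) ^ e 6 * (gv17 K 7) ^ e 7 *
      (gv17 K 8) ^ e 8 * (gv17 K 9) ^ e 9 := by
  simp only [monAB, Fin.prod_univ_six, gv17, Matrix.cons_val_zero, Matrix.cons_val_one,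
    Matrix.head_cons, Matrix.cons_val_two, Matrix.cons_val_three, Matrix.cons_val_four,
    Matrix.tail_cons, cv5, cv6, cv7, cv8, cv9]
  simp only [show ((3:Fin 6):ℕ) = 3 from rfl, show ((4:Fin 6):ℕ) = 4 from rfl,
    show ((5:Fin 6):ℕ) = 5 from rfl]
  norm_num
  rw [h1, h2, h3, h4, h5, h6, g1, g2, g3, g4, g5, g6]
  simp only [pow_add, mul_pow]
  ring


def abf17 (a b c d f g : ℕ) : ℕ → ℕ := fun k =>
  if k = 1 then a else if k = 2 then b else if k = 3 then c
  else if k = 4 then d else if k = 5 then f else if k = 6 then g else 0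


set_option maxHeartbeats 1000000 in
/-- decomposition of a control monomial into the ten generators, inside any
subalgebra containing the generators. -/
lemma monAB_mem_gen (u v : ℕ → ℕ)
    (E1 : u 1 + u 2 = u 4 + u 5) (E2 : v 1 + v 2 = v 4 + v 5)
    (E3 : u 2 + u 3 = v 2 + v 3) (E4 : u 3 + u 4 = v 3 + v 4) (E5 : u 5 + u 6 = v 5 + v 6)
    (A : Subalgebra K (MvPolynomial (Fin 6 ⊕ Fin 6) K)) (hA : ∀ j, gv17 K j ∈ A) :
    monAB K 6 u v ∈ A := by
  obtain ⟨e, h0, h1, h2, h3, h4, h5, h6, h7, h8, h9⟩ :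
      ∃ e : Fin 10 → ℕ, e 0 = min (u 3) (v 3) ∧ e 1 = v 6 - (u 1 - v 1) ∧ e 2 = u 1 - v 1 ∧
        e 3 = v 3 - u 3 ∧ e 4 = u 3 - v 3 ∧ e 5 = v 1 - u 1 ∧ e 6 = u 1 - u 5 ∧
        e 7 = u 1 - (u 1 - v 1) - (u 1 - u 5) ∧ e 8 = u 2 - (v 3 - u 3) - (u 5 - u 1) ∧
        e 9 = u 5 - u 1 :=
    ⟨![min (u 3) (v 3), v 6 - (u 1 - v 1), u 1 - v 1, v 3 - u 3, u 3 - v 3,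
      v 1 - u 1, u 1 - u 5, u 1 - (u 1 - v 1) - (u 1 - u 5),
      u 2 - (v 3 - u 3) - (u 5 - u 1), u 5 - u 1],
      rfl, rfl, rfl, rfl, rfl, rfl, rfl, rfl, rfl, rfl⟩
  have q1 : u 1 = e 2 + e 6 + e 7 := by omega
  have q2 : u 2 = e 3 + e 8 + e 9 := by omega
  have q3 : u 3 = e 0 + e 4 := by omega
  have q4 : u 4 = e 3 + e 6 + e 8 := by omega
  have q5 : u 5 = e 2 + e 7 + e 9 := by omega
  have q6 : u 6 = e 1 + e 5 := by omega
  have r1 : v 1 = e 5 + e 6 + e 7 := by omega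
  have r2 : v 2 = e 4 + e 8 + e 9 := by omega
  have r3 : v 3 = e 0 + e 3 := by omega
  have r4 : v 4 = e 4 + e 6 + e 8 := by omega
  have r5 : v 5 = e 5 + e 7 + e 9 := by omega
  have r6 : v 6 = e 1 + e 2 := by omega
  rw [monAB_decomp K u v e q1 q2 q3 q4 q5 q6 r1 r2 r3 r4 r5 r6]
  exact mul_mem (mul_mem (mul_mem (mul_mem (mul_mem (mul_mem (mul_mem (mul_mem (mul_mem
    (pow_mem (hA 0) _) (pow_mem (hA 1) _)) (pow_mem (hA 2) _)) (pow_mem (hA 3) _))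
    (pow_mem (hA 4) _)) (pow_mem (hA 5) _)) (pow_mem (hA 6) _)) (pow_mem (hA 7) _))
    (pow_mem (hA 8) _)) (pow_mem (hA 9) _)


/-- each generator is a control monomial -/
lemma gen_is_monAB (j : Fin 10) :
    ∃ u v : ℕ → ℕ,
      (u 1 + u 2 = u 4 + u 5 ∧ v 1 + v 2 = v 4 + v 5 ∧ u 2 + u 3 = v 2 + v 3 ∧
        u 3 + u 4 = v 3 + v 4 ∧ u 5 + u 6 = v 5 + v 6) ∧ gv17 K j = monAB K 6 u v := by
  have mk : ∀ a b c d f g a' b' c' d' f' g' : ℕ,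
      monAB K 6 (abf17 a b c d f g) (abf17 a' b' c' d' f' g') =
      X (Sum.inl 0) ^ a * X (Sum.inl 1) ^ b * X (Sum.inl 2) ^ c * X (Sum.inl 3) ^ d *
      X (Sum.inl 4) ^ f * X (Sum.inl 5) ^ g *
      (X (Sum.inr 0) ^ a' * X (Sum.inr 1) ^ b' * X (Sum.inr 2) ^ c' * X (Sum.inr 3) ^ d' *
      X (Sum.inr 4) ^ f' * X (Sum.inr 5) ^ g') := by
    intro a b c d f g a' b' c' d' f' g'
    simp only [monAB, Fin.prod_univ_six,
      show ((0:Fin 6):ℕ) = 0 from rfl, show ((1:Fin 6):ℕ) = 1 from rfl,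
      show ((2:Fin 6):ℕ) = 2 from rfl, show ((3:Fin 6):ℕ) = 3 from rfl,
      show ((4:Fin 6):ℕ) = 4 from rfl, show ((5:Fin 6):ℕ) = 5 from rfl]
    norm_num [abf17]
  fin_cases j
  · exact ⟨(abf17 0 0 1 0 0 0), (abf17 0 0 1 0 0 0), by norm_num [abf17], by rw [mk]; simp [gv17]; try ring⟩
  · exact ⟨(abf17 0 0 0 0 0 1), (abf17 0 0 0 0 0 1), by norm_num [abf17], by rw [mk]; simp [gv17, cv5]; try ring⟩
  · exact ⟨(abf17 1 0 0 0 1 0), (abf17 0 0 0 0 0 1), by norm_num [abf17], by rw [mk]; simp [gv17]; try ring⟩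
  · exact ⟨(abf17 0 1 0 1 0 0), (abf17 0 0 1 0 0 0), by norm_num [abf17], by rw [mk]; simp [gv17]; try ring⟩
  · exact ⟨(abf17 0 0 1 0 0 0), (abf17 0 1 0 1 0 0), by norm_num [abf17], by rw [mk]; simp [gv17]; try ring⟩
  · exact ⟨(abf17 0 0 0 0 0 1), (abf17 1 0 0 0 1 0), by norm_num [abf17], by rw [mk]; simp [gv17, cv5]; try ring⟩
  · exact ⟨(abf17 1 0 0 1 0 0), (abf17 1 0 0 1 0 0), by norm_num [abf17], by rw [mk]; simp [gv17, cv6]; try ring⟩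
  · exact ⟨(abf17 1 0 0 0 1 0), (abf17 1 0 0 0 1 0), by norm_num [abf17], by rw [mk]; simp [gv17, cv7]; try ring⟩
  · exact ⟨(abf17 0 1 0 1 0 0), (abf17 0 1 0 1 0 0), by norm_num [abf17], by rw [mk]; simp [gv17, cv8]; try ring⟩
  · exact ⟨(abf17 0 1 0 0 1 0), (abf17 0 1 0 0 1 0), by norm_num [abf17], by rw [mk]; simp [gv17, cv9]; try ring⟩


end Stmt17Aux

/-- For `n = 6` and the matching `Θ(x_1)=x_4, Θ(y_1)=y_4, Θ(x_2)=y_2, Θ(x_3)=y_3,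
Θ(x_5)=y_5`: `S(Θ)` is generated by the listed ten monomials, and the kernel of the
presentation is generated by `Y_1Y_4 - X_2Z_2`, `Y_2Y_3 - X_1Z_3`, `Z_1Z_4 - Z_2Z_3`;
so `S(Θ)` is a complete intersection of codimension 3.
Generator order: `X_1, X_2, Y_1, Y_2, Y_3, Y_4, Z_1, Z_2, Z_3, Z_4` ↦ variables `0,…,9`. -/
theorem stmt17 (K : Type*) [Field K] :
    ((Algebra.adjoin K
        ({Av K 6 2 * Bv K 6 2, Av K 6 5 * Bv K 6 5,
          Av K 6 0 * Av K 6 4 * Bv K 6 5, Av K 6 1 * Av K 6 3 * Bv K 6 2,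
          Av K 6 2 * Bv K 6 1 * Bv K 6 3, Av K 6 5 * Bv K 6 0 * Bv K 6 4,
          Av K 6 0 * Av K 6 3 * Bv K 6 0 * Bv K 6 3,
          Av K 6 0 * Av K 6 4 * Bv K 6 0 * Bv K 6 4,
          Av K 6 1 * Av K 6 3 * Bv K 6 1 * Bv K 6 3,
          Av K 6 1 * Av K 6 4 * Bv K 6 1 * Bv K 6 4} :
          Set (MvPolynomial (Fin 6 ⊕ Fin 6) K)) :
        Subalgebra K (MvPolynomial (Fin 6 ⊕ Fin 6) K)) : Set (MvPolynomial (Fin 6 ⊕ Fin 6) K)) =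
      ↑(controlSpan K 6
        (fun u v => u 1 + u 2 = u 4 + u 5 ∧ v 1 + v 2 = v 4 + v 5 ∧
          u 2 + u 3 = v 2 + v 3 ∧ u 3 + u 4 = v 3 + v 4 ∧ u 5 + u 6 = v 5 + v 6)) ∧
    RingHom.ker
        (aeval (R := K)
          ![Av K 6 2 * Bv K 6 2, Av K 6 5 * Bv K 6 5,
            Av K 6 0 * Av K 6 4 * Bv K 6 5, Av K 6 1 * Av K 6 3 * Bv K 6 2,
            Av K 6 2 * Bv K 6 1 * Bv K 6 3, Av K 6 5 * Bv K 6 0 * Bv K 6 4,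
            Av K 6 0 * Av K 6 3 * Bv K 6 0 * Bv K 6 3,
            Av K 6 0 * Av K 6 4 * Bv K 6 0 * Bv K 6 4,
            Av K 6 1 * Av K 6 3 * Bv K 6 1 * Bv K 6 3,
            Av K 6 1 * Av K 6 4 * Bv K 6 1 * Bv K 6 4] :
          MvPolynomial (Fin 10) K →ₐ[K] MvPolynomial (Fin 6 ⊕ Fin 6) K) =
      Ideal.span {X 2 * X 5 - X 1 * X 7, X 3 * X 4 - X 0 * X 8,
        X 6 * X 9 - X 7 * X 8} := by
  constructor
  · -- Part 1 : generation
    have hone : (1 : MvPolynomial (Fin 6 ⊕ Fin 6) K) ∈ controlSpan K 6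
        (fun u v => u 1 + u 2 = u 4 + u 5 ∧ v 1 + v 2 = v 4 + v 5 ∧
          u 2 + u 3 = v 2 + v 3 ∧ u 3 + u 4 = v 3 + v 4 ∧ u 5 + u 6 = v 5 + v 6) :=
      Submodule.subset_span ⟨fun _ => 0, fun _ => 0, by norm_num, (monAB_one_s17 K).symm⟩
    have hmul : ∀ x y : MvPolynomial (Fin 6 ⊕ Fin 6) K,
        x ∈ controlSpan K 6 (fun u v => u 1 + u 2 = u 4 + u 5 ∧ v 1 + v 2 = v 4 + v 5 ∧
          u 2 + u 3 = v 2 + v 3 ∧ u 3 + u 4 = v 3 + v 4 ∧ u 5 + u 6 = v 5 + v 6) →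
        y ∈ controlSpan K 6 (fun u v => u 1 + u 2 = u 4 + u 5 ∧ v 1 + v 2 = v 4 + v 5 ∧
          u 2 + u 3 = v 2 + v 3 ∧ u 3 + u 4 = v 3 + v 4 ∧ u 5 + u 6 = v 5 + v 6) →
        x * y ∈ controlSpan K 6 (fun u v => u 1 + u 2 = u 4 + u 5 ∧ v 1 + v 2 = v 4 + v 5 ∧
          u 2 + u 3 = v 2 + v 3 ∧ u 3 + u 4 = v 3 + v 4 ∧ u 5 + u 6 = v 5 + v 6) := by
      intro x y hx hy
      have h2 := Submodule.mul_mem_mul hx hy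
      rw [controlSpan, Submodule.span_mul_span] at h2
      refine Submodule.span_le.mpr ?_ h2
      rintro p ⟨p1, hp1, p2, hp2, rfl⟩
      obtain ⟨u, v, hE, rfl⟩ := hp1
      obtain ⟨u', v', hE', rfl⟩ := hp2
      dsimp only
      rw [monAB_mul_s17]
      refine Submodule.subset_span ⟨fun i => u i + u' i, fun i => v i + v' i, ?_, rfl⟩
      obtain ⟨a1, a2, a3, a4, a5⟩ := hE
      obtain ⟨b1, b2, b3, b4, b5⟩ := hE'
      refine ⟨?_, ?_, ?_, ?_, ?_⟩ <;> (dsimp only; omega)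
    refine subset_antisymm ?_ ?_
    · intro x hx
      exact Algebra.adjoin_le (S := Submodule.toSubalgebra _ hone hmul)
        (by
          intro p hp
          simp only [Set.mem_insert_iff, Set.mem_singleton_iff] at hp
          have hj : ∃ j : Fin 10, p = gv17 K j := by
            rcases hp with rfl|rfl|rfl|rfl|rfl|rfl|rfl|rfl|rfl|rfl
            exacts [⟨0, rfl⟩, ⟨1, rfl⟩, ⟨2, rfl⟩, ⟨3, rfl⟩, ⟨4, rfl⟩,
              ⟨5, rfl⟩, ⟨6, rfl⟩, ⟨7, rfl⟩, ⟨8, rfl⟩, ⟨9, rfl⟩]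
          obtain ⟨j, rfl⟩ := hj
          obtain ⟨u, v, hE, heq⟩ := gen_is_monAB K j
          rw [heq]
          exact Submodule.subset_span ⟨u, v, hE, rfl⟩) hx
    · intro x hx
      refine (Submodule.span_le (p := Subalgebra.toSubmodule (Algebra.adjoin K _))).mpr ?_ hx
      rintro p ⟨u, v, ⟨E1, E2, E3, E4, E5⟩, rfl⟩
      refine monAB_mem_gen K u v E1 E2 E3 E4 E5 _ ?_
      intro j
      fin_cases j
      · exact Algebra.subset_adjoin (Set.mem_insert _ _)
      · exact Algebra.subset_adjoin (Set.mem_insert_of_mem _ (Set.mem_insert _ _))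
      · exact Algebra.subset_adjoin (Set.mem_insert_of_mem _ (Set.mem_insert_of_mem _ (Set.mem_insert _ _)))
      · exact Algebra.subset_adjoin (Set.mem_insert_of_mem _ (Set.mem_insert_of_mem _ (Set.mem_insert_of_mem _ (Set.mem_insert _ _))))
      · exact Algebra.subset_adjoin (Set.mem_insert_of_mem _ (Set.mem_insert_of_mem _ (Set.mem_insert_of_mem _ (Set.mem_insert_of_mem _ (Set.mem_insert _ _)))))
      · exact Algebra.subset_adjoin (Set.mem_insert_of_mem _ (Set.mem_insert_of_mem _ (Set.mem_insert_of_mem _ (Set.mem_insert_of_mem _ (Set.mem_insert_of_mem _ (Set.mem_insert _ _))))))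
      · exact Algebra.subset_adjoin (Set.mem_insert_of_mem _ (Set.mem_insert_of_mem _ (Set.mem_insert_of_mem _ (Set.mem_insert_of_mem _ (Set.mem_insert_of_mem _ (Set.mem_insert_of_mem _ (Set.mem_insert _ _)))))))
      · exact Algebra.subset_adjoin (Set.mem_insert_of_mem _ (Set.mem_insert_of_mem _ (Set.mem_insert_of_mem _ (Set.mem_insert_of_mem _ (Set.mem_insert_of_mem _ (Set.mem_insert_of_mem _ (Set.mem_insert_of_mem _ (Set.mem_insert _ _))))))))
      · exact Algebra.subset_adjoin (Set.mem_insert_of_mem _ (Set.mem_insert_of_mem _ (Set.mem_insert_of_mem _ (Set.mem_insert_of_mem _ (Set.mem_insert_of_mem _ (Set.mem_insert_of_mem _ (Set.mem_insert_of_mem _ (Set.mem_insert_of_mem _ (Set.mem_insert _ _)))))))))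
      · exact Algebra.subset_adjoin (Set.mem_insert_of_mem _ (Set.mem_insert_of_mem _ (Set.mem_insert_of_mem _ (Set.mem_insert_of_mem _ (Set.mem_insert_of_mem _ (Set.mem_insert_of_mem _ (Set.mem_insert_of_mem _ (Set.mem_insert_of_mem _ (Set.mem_insert_of_mem _ (rfl))))))))))
  · -- Part 2 : the kernel
    have hv : (![Av K 6 2 * Bv K 6 2, Av K 6 5 * Bv K 6 5,
            Av K 6 0 * Av K 6 4 * Bv K 6 5, Av K 6 1 * Av K 6 3 * Bv K 6 2,
            Av K 6 2 * Bv K 6 1 * Bv K 6 3, Av K 6 5 * Bv K 6 0 * Bv K 6 4,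
            Av K 6 0 * Av K 6 3 * Bv K 6 0 * Bv K 6 3,
            Av K 6 0 * Av K 6 4 * Bv K 6 0 * Bv K 6 4,
            Av K 6 1 * Av K 6 3 * Bv K 6 1 * Bv K 6 3,
            Av K 6 1 * Av K 6 4 * Bv K 6 1 * Bv K 6 4] :
          Fin 10 → MvPolynomial (Fin 6 ⊕ Fin 6) K) = gv17 K := rfl
    rw [hv]
    show RingHom.ker (aeval (gv17 K) : MvPolynomial (Fin 10) K →ₐ[K] _) = rid17 K
    refine le_antisymm ?_ (rid17_le_ker K)
    intro f hf
    exact ker_le_rid17 K f (RingHom.mem_ker.mp hf)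
end

section
/- Let K be a field and S = K[A_1,…,A_7,B_1,…,B_7]. Let S(Θ) be the K-span of the monomials A_1^{u_1}⋯A_7^{u_7}B_1^{v_1}⋯B_7^{v_7} satisfying u_1+u_2 = v_3+v_4, u_2+u_3 = v_2+v_3, u_3+u_4 = v_1+v_2, u_4+u_5 = v_6+v_7, u_5+u_6 = v_5+v_6, u_6+u_7 = v_4+v_5 (the matching Θ(x_1)=y_3, Θ(x_2)=y_2, Θ(x_3)=y_1, Θ(x_4)=y_6, Θ(x_5)=y_5, Θ(x_6)=y_4 for n = 7). Then the eleven monomials X_1 = A_2B_3, X_2 = A_3B_2, X_3 = A_5B_6, X_4 = A_6B_5, Y_1 = A_1A_7B_4, Y_2 = A_4B_1B_7, Z_1 = A_1A_3B_1B_3, Z_2 = A_5A_7B_5B_7, W_1 = A_1A_4A_6B_1B_4B_6, W_2 = A_2A_4A_6B_2B_4B_6, W_3 = A_2A_4A_7B_2B_4B_7 all lie in S(Θ), and they generate S(Θ) as a K-algebra. -/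
open MvPolynomial

namespace Stmt18Aux

/-- The control equations for our matching. -/
abbrev E7 (u v : ℕ → ℕ) : Prop :=
  u 1 + u 2 = v 3 + v 4 ∧ u 2 + u 3 = v 2 + v 3 ∧
  u 3 + u 4 = v 1 + v 2 ∧ u 4 + u 5 = v 6 + v 7 ∧
  u 5 + u 6 = v 5 + v 6 ∧ u 6 + u 7 = v 4 + v 5

/-- Indicator exponent function of a list of indices. -/
def ind (l : List ℕ) : ℕ → ℕ := fun i => if i ∈ l then 1 else 0

variable (K : Type*) [Field K]

/-- The eleven generators. -/
noncomputable def GSet : Set (MvPolynomial (Fin 7 ⊕ Fin 7) K) :=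
  {Av K 7 1 * Bv K 7 2, Av K 7 2 * Bv K 7 1,
    Av K 7 4 * Bv K 7 5, Av K 7 5 * Bv K 7 4,
    Av K 7 0 * Av K 7 6 * Bv K 7 3, Av K 7 3 * Bv K 7 0 * Bv K 7 6,
    Av K 7 0 * Av K 7 2 * Bv K 7 0 * Bv K 7 2,
    Av K 7 4 * Av K 7 6 * Bv K 7 4 * Bv K 7 6,
    Av K 7 0 * Av K 7 3 * Av K 7 5 * Bv K 7 0 * Bv K 7 3 * Bv K 7 5,
    Av K 7 1 * Av K 7 3 * Av K 7 5 * Bv K 7 1 * Bv K 7 3 * Bv K 7 5,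
    Av K 7 1 * Av K 7 3 * Av K 7 6 * Bv K 7 1 * Bv K 7 3 * Bv K 7 6}

lemma monAB_expand (u v : ℕ → ℕ) : monAB K 7 u v =
    (X (Sum.inl 0) ^ u 1 * X (Sum.inl 1) ^ u 2 * X (Sum.inl 2) ^ u 3 * X (Sum.inl 3) ^ u 4 *
     X (Sum.inl 4) ^ u 5 * X (Sum.inl 5) ^ u 6 * X (Sum.inl 6) ^ u 7) *
    (X (Sum.inr 0) ^ v 1 * X (Sum.inr 1) ^ v 2 * X (Sum.inr 2) ^ v 3 * X (Sum.inr 3) ^ v 4 *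
     X (Sum.inr 4) ^ v 5 * X (Sum.inr 5) ^ v 6 * X (Sum.inr 6) ^ v 7) := by
  rw [monAB, Fin.prod_univ_seven, Fin.prod_univ_seven]; rfl

lemma monAB_mul (n : ℕ) (u v u' v' : ℕ → ℕ) :
    monAB K n u v * monAB K n u' v'
      = monAB K n (fun i => u i + u' i) (fun i => v i + v' i) := by
  simp only [monAB, pow_add, Finset.prod_mul_distrib]; ring

lemma monAB_congr {u v u' v' : ℕ → ℕ}
    (hu : ∀ i, 1 ≤ i → i ≤ 7 → u i = u' i) (hv : ∀ i, 1 ≤ i → i ≤ 7 → v i = v' i) :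
    monAB K 7 u v = monAB K 7 u' v' := by
  rw [monAB_expand, monAB_expand,
    hu 1 (by norm_num) (by norm_num), hu 2 (by norm_num) (by norm_num),
    hu 3 (by norm_num) (by norm_num), hu 4 (by norm_num) (by norm_num),
    hu 5 (by norm_num) (by norm_num), hu 6 (by norm_num) (by norm_num),
    hu 7 (by norm_num) (by norm_num),
    hv 1 (by norm_num) (by norm_num), hv 2 (by norm_num) (by norm_num),
    hv 3 (by norm_num) (by norm_num), hv 4 (by norm_num) (by norm_num),
    hv 5 (by norm_num) (by norm_num), hv 6 (by norm_num) (by norm_num),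
    hv 7 (by norm_num) (by norm_num)]

lemma monAB_one {u v : ℕ → ℕ}
    (hu : ∀ i, 1 ≤ i → i ≤ 7 → u i = 0) (hv : ∀ i, 1 ≤ i → i ≤ 7 → v i = 0) :
    monAB K 7 u v = 1 := by
  rw [monAB_congr K (u' := fun _ => 0) (v' := fun _ => 0) hu hv, monAB_expand]
  simp

/-- The eleven generators as `monAB` of indicator vectors. -/
lemma rep1 : monAB K 7 (ind [2]) (ind [3]) = Av K 7 1 * Bv K 7 2 := by
  rw [monAB_expand]; simp [ind, Av, Bv]
lemma rep2 : monAB K 7 (ind [3]) (ind [2]) = Av K 7 2 * Bv K 7 1 := by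
  rw [monAB_expand]; simp [ind, Av, Bv]
lemma rep3 : monAB K 7 (ind [5]) (ind [6]) = Av K 7 4 * Bv K 7 5 := by
  rw [monAB_expand]; simp [ind, Av, Bv]
lemma rep4 : monAB K 7 (ind [6]) (ind [5]) = Av K 7 5 * Bv K 7 4 := by
  rw [monAB_expand]; simp [ind, Av, Bv]
lemma rep5 : monAB K 7 (ind [1,7]) (ind [4]) = Av K 7 0 * Av K 7 6 * Bv K 7 3 := by
  rw [monAB_expand]; simp [ind, Av, Bv]; try ring
lemma rep6 : monAB K 7 (ind [4]) (ind [1,7]) = Av K 7 3 * Bv K 7 0 * Bv K 7 6 := by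
  rw [monAB_expand]; simp [ind, Av, Bv]; try ring
lemma rep7 : monAB K 7 (ind [1,3]) (ind [1,3])
    = Av K 7 0 * Av K 7 2 * Bv K 7 0 * Bv K 7 2 := by
  rw [monAB_expand]; simp [ind, Av, Bv]; try ring
lemma rep8 : monAB K 7 (ind [5,7]) (ind [5,7])
    = Av K 7 4 * Av K 7 6 * Bv K 7 4 * Bv K 7 6 := by
  rw [monAB_expand]; simp [ind, Av, Bv]; try ring
lemma rep9 : monAB K 7 (ind [1,4,6]) (ind [1,4,6])
    = Av K 7 0 * Av K 7 3 * Av K 7 5 * Bv K 7 0 * Bv K 7 3 * Bv K 7 5 := by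
  rw [monAB_expand]; simp [ind, Av, Bv]; try ring
lemma rep10 : monAB K 7 (ind [2,4,6]) (ind [2,4,6])
    = Av K 7 1 * Av K 7 3 * Av K 7 5 * Bv K 7 1 * Bv K 7 3 * Bv K 7 5 := by
  rw [monAB_expand]; simp [ind, Av, Bv]; try ring
lemma rep11 : monAB K 7 (ind [2,4,7]) (ind [2,4,7])
    = Av K 7 1 * Av K 7 3 * Av K 7 6 * Bv K 7 1 * Bv K 7 3 * Bv K 7 6 := by
  rw [monAB_expand]; simp [ind, Av, Bv]; try ring

lemma domB : ∀ p1 p2 p3 p4 p5 p6 p7 q1 q2 q3 q4 q5 q6 q7 : Bool,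
    ((p1 || p2) = (q3 || q4)) → ((p2||p3) = (q2||q3)) → ((p3||p4) = (q1||q2)) →
    ((p4||p5) = (q6||q7)) → ((p5||p6) = (q5||q6)) → ((p6||p7) = (q4||q5)) →
    (p1||p2||p3||p4||p5||p6||p7||q1||q2||q3||q4||q5||q6||q7) = true →
    ((p2&&q3) || (p3&&q2) || (p5&&q6) || (p6&&q5) || (p1&&p7&&q4) || (p4&&q1&&q7)
     || (p1&&p3&&q1&&q3) || (p5&&p7&&q5&&q7)
     || (p1&&p4&&p6&&q1&&q4&&q6) || (p2&&p4&&p6&&q2&&q4&&q6)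
     || (p2&&p4&&p7&&q2&&q4&&q7)) = true := by decide

lemma dom (u1 u2 u3 u4 u5 u6 u7 v1 v2 v3 v4 v5 v6 v7 : ℕ)
    (e1 : u1 + u2 = v3 + v4) (e2 : u2 + u3 = v2 + v3) (e3 : u3 + u4 = v1 + v2)
    (e4 : u4 + u5 = v6 + v7) (e5 : u5 + u6 = v5 + v6) (e6 : u6 + u7 = v4 + v5)
    (hp : u1+u2+u3+u4+u5+u6+u7+v1+v2+v3+v4+v5+v6+v7 ≠ 0) :
    (1 ≤ u2 ∧ 1 ≤ v3) ∨ (1 ≤ u3 ∧ 1 ≤ v2) ∨ (1 ≤ u5 ∧ 1 ≤ v6) ∨ (1 ≤ u6 ∧ 1 ≤ v5) ∨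
    (1 ≤ u1 ∧ 1 ≤ u7 ∧ 1 ≤ v4) ∨ (1 ≤ u4 ∧ 1 ≤ v1 ∧ 1 ≤ v7) ∨
    (1 ≤ u1 ∧ 1 ≤ u3 ∧ 1 ≤ v1 ∧ 1 ≤ v3) ∨ (1 ≤ u5 ∧ 1 ≤ u7 ∧ 1 ≤ v5 ∧ 1 ≤ v7) ∨
    (1 ≤ u1 ∧ 1 ≤ u4 ∧ 1 ≤ u6 ∧ 1 ≤ v1 ∧ 1 ≤ v4 ∧ 1 ≤ v6) ∨
    (1 ≤ u2 ∧ 1 ≤ u4 ∧ 1 ≤ u6 ∧ 1 ≤ v2 ∧ 1 ≤ v4 ∧ 1 ≤ v6) ∨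
    (1 ≤ u2 ∧ 1 ≤ u4 ∧ 1 ≤ u7 ∧ 1 ≤ v2 ∧ 1 ≤ v4 ∧ 1 ≤ v7) := by
  have key := domB (decide (1 ≤ u1)) (decide (1 ≤ u2)) (decide (1 ≤ u3)) (decide (1 ≤ u4))
    (decide (1 ≤ u5)) (decide (1 ≤ u6)) (decide (1 ≤ u7)) (decide (1 ≤ v1)) (decide (1 ≤ v2))
    (decide (1 ≤ v3)) (decide (1 ≤ v4)) (decide (1 ≤ v5)) (decide (1 ≤ v6)) (decide (1 ≤ v7))
    (by rw [← Bool.decide_or, ← Bool.decide_or, decide_eq_decide]; omega)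
    (by rw [← Bool.decide_or, ← Bool.decide_or, decide_eq_decide]; omega)
    (by rw [← Bool.decide_or, ← Bool.decide_or, decide_eq_decide]; omega)
    (by rw [← Bool.decide_or, ← Bool.decide_or, decide_eq_decide]; omega)
    (by rw [← Bool.decide_or, ← Bool.decide_or, decide_eq_decide]; omega)
    (by rw [← Bool.decide_or, ← Bool.decide_or, decide_eq_decide]; omega)
    (by simp only [← Bool.decide_or, decide_eq_true_eq]; omega)
  simpa only [Bool.or_eq_true, Bool.and_eq_true, decide_eq_true_eq, and_assoc, or_assoc] using key

lemma step (u v : ℕ → ℕ) (la lb : List ℕ)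
    (hle : ∀ i, 1 ≤ i → i ≤ 7 → ind la i ≤ u i ∧ ind lb i ≤ v i)
    (hg : monAB K 7 (ind la) (ind lb) ∈ Submonoid.closure (GSet K))
    (hrest : monAB K 7 (fun i => u i - ind la i) (fun i => v i - ind lb i)
      ∈ Submonoid.closure (GSet K)) :
    monAB K 7 u v ∈ Submonoid.closure (GSet K) := by
  have h : monAB K 7 u v = monAB K 7 (ind la) (ind lb)
      * monAB K 7 (fun i => u i - ind la i) (fun i => v i - ind lb i) := by
    rw [monAB_mul]
    refine monAB_congr K (fun i h1 h7 => ?_) (fun i h1 h7 => ?_)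
    · have := (hle i h1 h7).1
      omega
    · have := (hle i h1 h7).2
      omega
  rw [h]; exact mul_mem hg hrest

set_option maxHeartbeats 1000000 in
lemma rep : ∀ (N : ℕ) (u v : ℕ → ℕ),
    (∑ i ∈ Finset.range 7, (u (i + 1) + v (i + 1))) = N → E7 u v →
    monAB K 7 u v ∈ Submonoid.closure (GSet K) := by
  intro N
  induction N using Nat.strong_induction_on with
  | _ N IH =>
    intro u v hN hE
    obtain ⟨e1, e2, e3, e4, e5, e6⟩ := hE
    simp [Finset.sum_range_succ] at hN
    by_cases hz : u 1 = 0 ∧ u 2 = 0 ∧ u 3 = 0 ∧ u 4 = 0 ∧ u 5 = 0 ∧ u 6 = 0 ∧ u 7 = 0 ∧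
        v 1 = 0 ∧ v 2 = 0 ∧ v 3 = 0 ∧ v 4 = 0 ∧ v 5 = 0 ∧ v 6 = 0 ∧ v 7 = 0
    · rw [monAB_one K (fun i h1 h7 => by interval_cases i <;> omega)
        (fun i h1 h7 => by interval_cases i <;> omega)]
      exact one_mem _
    · have hp : u 1 + u 2 + u 3 + u 4 + u 5 + u 6 + u 7 +
          v 1 + v 2 + v 3 + v 4 + v 5 + v 6 + v 7 ≠ 0 := by omega
      have hdom := dom (u 1) (u 2) (u 3) (u 4) (u 5) (u 6) (u 7)
        (v 1) (v 2) (v 3) (v 4) (v 5) (v 6) (v 7) e1 e2 e3 e4 e5 e6 hp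
      rcases hdom with h|h|h|h|h|h|h|h|h|h|h
      · refine step K u v [2] [3]
          (fun i h1 h7 => by interval_cases i <;> simp [ind] <;> omega)
          (by rw [rep1]; exact Submonoid.subset_closure (by simp [GSet]))
          (IH _ ?_ _ _ rfl ⟨?_, ?_, ?_, ?_, ?_, ?_⟩) <;>
          simp [Finset.sum_range_succ, ind] <;> omega
      · refine step K u v [3] [2]
          (fun i h1 h7 => by interval_cases i <;> simp [ind] <;> omega)
          (by rw [rep2]; exact Submonoid.subset_closure (by simp [GSet]))
          (IH _ ?_ _ _ rfl ⟨?_, ?_, ?_, ?_, ?_, ?_⟩) <;>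
          simp [Finset.sum_range_succ, ind] <;> omega
      · refine step K u v [5] [6]
          (fun i h1 h7 => by interval_cases i <;> simp [ind] <;> omega)
          (by rw [rep3]; exact Submonoid.subset_closure (by simp [GSet]))
          (IH _ ?_ _ _ rfl ⟨?_, ?_, ?_, ?_, ?_, ?_⟩) <;>
          simp [Finset.sum_range_succ, ind] <;> omega
      · refine step K u v [6] [5]
          (fun i h1 h7 => by interval_cases i <;> simp [ind] <;> omega)
          (by rw [rep4]; exact Submonoid.subset_closure (by simp [GSet]))
          (IH _ ?_ _ _ rfl ⟨?_, ?_, ?_, ?_, ?_, ?_⟩) <;>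
          simp [Finset.sum_range_succ, ind] <;> omega
      · refine step K u v [1,7] [4]
          (fun i h1 h7 => by interval_cases i <;> simp [ind] <;> omega)
          (by rw [rep5]; exact Submonoid.subset_closure (by simp [GSet]))
          (IH _ ?_ _ _ rfl ⟨?_, ?_, ?_, ?_, ?_, ?_⟩) <;>
          simp [Finset.sum_range_succ, ind] <;> omega
      · refine step K u v [4] [1,7]
          (fun i h1 h7 => by interval_cases i <;> simp [ind] <;> omega)
          (by rw [rep6]; exact Submonoid.subset_closure (by simp [GSet]))
          (IH _ ?_ _ _ rfl ⟨?_, ?_, ?_, ?_, ?_, ?_⟩) <;>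
          simp [Finset.sum_range_succ, ind] <;> omega
      · refine step K u v [1,3] [1,3]
          (fun i h1 h7 => by interval_cases i <;> simp [ind] <;> omega)
          (by rw [rep7]; exact Submonoid.subset_closure (by simp [GSet]))
          (IH _ ?_ _ _ rfl ⟨?_, ?_, ?_, ?_, ?_, ?_⟩) <;>
          simp [Finset.sum_range_succ, ind] <;> omega
      · refine step K u v [5,7] [5,7]
          (fun i h1 h7 => by interval_cases i <;> simp [ind] <;> omega)
          (by rw [rep8]; exact Submonoid.subset_closure (by simp [GSet]))
          (IH _ ?_ _ _ rfl ⟨?_, ?_, ?_, ?_, ?_, ?_⟩) <;>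
          simp [Finset.sum_range_succ, ind] <;> omega
      · refine step K u v [1,4,6] [1,4,6]
          (fun i h1 h7 => by interval_cases i <;> simp [ind] <;> omega)
          (by rw [rep9]; exact Submonoid.subset_closure (by simp [GSet]))
          (IH _ ?_ _ _ rfl ⟨?_, ?_, ?_, ?_, ?_, ?_⟩) <;>
          simp [Finset.sum_range_succ, ind] <;> omega
      · refine step K u v [2,4,6] [2,4,6]
          (fun i h1 h7 => by interval_cases i <;> simp [ind] <;> omega)
          (by rw [rep10]; exact Submonoid.subset_closure (by simp [GSet]))
          (IH _ ?_ _ _ rfl ⟨?_, ?_, ?_, ?_, ?_, ?_⟩) <;>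
          simp [Finset.sum_range_succ, ind] <;> omega
      · refine step K u v [2,4,7] [2,4,7]
          (fun i h1 h7 => by interval_cases i <;> simp [ind] <;> omega)
          (by rw [rep11]; exact Submonoid.subset_closure (by simp [GSet]))
          (IH _ ?_ _ _ rfl ⟨?_, ?_, ?_, ?_, ?_, ?_⟩) <;>
          simp [Finset.sum_range_succ, ind] <;> omega

/-- The set of solution monomials, as a submonoid. -/
noncomputable def Smon : Submonoid (MvPolynomial (Fin 7 ⊕ Fin 7) K) where
  carrier := {p | ∃ u v : ℕ → ℕ, E7 u v ∧ p = monAB K 7 u v}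
  one_mem' := ⟨fun _ => 0, fun _ => 0, ⟨rfl, rfl, rfl, rfl, rfl, rfl⟩,
    (monAB_one K (fun _ _ _ => rfl) (fun _ _ _ => rfl)).symm⟩
  mul_mem' := by
    rintro p q ⟨u, v, hE, rfl⟩ ⟨u', v', hE', rfl⟩
    refine ⟨fun i => u i + u' i, fun i => v i + v' i,
      ⟨?_, ?_, ?_, ?_, ?_, ?_⟩, monAB_mul K 7 u v u' v'⟩ <;> (try dsimp only) <;> omega

lemma gsub : GSet K ⊆ (Smon K : Set (MvPolynomial (Fin 7 ⊕ Fin 7) K)) := by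
  rintro p (rfl|rfl|rfl|rfl|rfl|rfl|rfl|rfl|rfl|rfl|rfl)
  · exact ⟨ind [2], ind [3], by decide, (rep1 K).symm⟩
  · exact ⟨ind [3], ind [2], by decide, (rep2 K).symm⟩
  · exact ⟨ind [5], ind [6], by decide, (rep3 K).symm⟩
  · exact ⟨ind [6], ind [5], by decide, (rep4 K).symm⟩
  · exact ⟨ind [1,7], ind [4], by decide, (rep5 K).symm⟩
  · exact ⟨ind [4], ind [1,7], by decide, (rep6 K).symm⟩
  · exact ⟨ind [1,3], ind [1,3], by decide, (rep7 K).symm⟩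
  · exact ⟨ind [5,7], ind [5,7], by decide, (rep8 K).symm⟩
  · exact ⟨ind [1,4,6], ind [1,4,6], by decide, (rep9 K).symm⟩
  · exact ⟨ind [2,4,6], ind [2,4,6], by decide, (rep10 K).symm⟩
  · exact ⟨ind [2,4,7], ind [2,4,7], by decide, (rep11 K).symm⟩

lemma closure_eq : (Submonoid.closure (GSet K) : Set (MvPolynomial (Fin 7 ⊕ Fin 7) K))
    = {p | ∃ u v : ℕ → ℕ, E7 u v ∧ p = monAB K 7 u v} := by
  apply le_antisymm
  · exact (Submonoid.closure_le (S := Smon K)).2 (gsub K)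
  · rintro p ⟨u, v, hE, rfl⟩
    exact rep K _ u v rfl hE

end Stmt18Aux

/-- For `n = 7` and the matching `Θ(x_1)=y_3, Θ(x_2)=y_2, Θ(x_3)=y_1, Θ(x_4)=y_6,
Θ(x_5)=y_5, Θ(x_6)=y_4`: the eleven monomials
`X_1 = A_2B_3, X_2 = A_3B_2, X_3 = A_5B_6, X_4 = A_6B_5, Y_1 = A_1A_7B_4,
Y_2 = A_4B_1B_7, Z_1 = A_1A_3B_1B_3, Z_2 = A_5A_7B_5B_7, W_1 = A_1A_4A_6B_1B_4B_6,
W_2 = A_2A_4A_6B_2B_4B_6, W_3 = A_2A_4A_7B_2B_4B_7`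
all lie in `S(Θ)` and generate it as a `K`-algebra. -/
theorem stmt18 (K : Type*) [Field K] :
    (∀ p ∈ ({Av K 7 1 * Bv K 7 2, Av K 7 2 * Bv K 7 1,
        Av K 7 4 * Bv K 7 5, Av K 7 5 * Bv K 7 4,
        Av K 7 0 * Av K 7 6 * Bv K 7 3, Av K 7 3 * Bv K 7 0 * Bv K 7 6,
        Av K 7 0 * Av K 7 2 * Bv K 7 0 * Bv K 7 2,
        Av K 7 4 * Av K 7 6 * Bv K 7 4 * Bv K 7 6,
        Av K 7 0 * Av K 7 3 * Av K 7 5 * Bv K 7 0 * Bv K 7 3 * Bv K 7 5,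
        Av K 7 1 * Av K 7 3 * Av K 7 5 * Bv K 7 1 * Bv K 7 3 * Bv K 7 5,
        Av K 7 1 * Av K 7 3 * Av K 7 6 * Bv K 7 1 * Bv K 7 3 * Bv K 7 6} :
        Set (MvPolynomial (Fin 7 ⊕ Fin 7) K)),
      p ∈ controlSpan K 7
        (fun u v => u 1 + u 2 = v 3 + v 4 ∧ u 2 + u 3 = v 2 + v 3 ∧
          u 3 + u 4 = v 1 + v 2 ∧ u 4 + u 5 = v 6 + v 7 ∧
          u 5 + u 6 = v 5 + v 6 ∧ u 6 + u 7 = v 4 + v 5)) ∧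
    ((Algebra.adjoin K
        ({Av K 7 1 * Bv K 7 2, Av K 7 2 * Bv K 7 1,
          Av K 7 4 * Bv K 7 5, Av K 7 5 * Bv K 7 4,
          Av K 7 0 * Av K 7 6 * Bv K 7 3, Av K 7 3 * Bv K 7 0 * Bv K 7 6,
          Av K 7 0 * Av K 7 2 * Bv K 7 0 * Bv K 7 2,
          Av K 7 4 * Av K 7 6 * Bv K 7 4 * Bv K 7 6,
          Av K 7 0 * Av K 7 3 * Av K 7 5 * Bv K 7 0 * Bv K 7 3 * Bv K 7 5,
          Av K 7 1 * Av K 7 3 * Av K 7 5 * Bv K 7 1 * Bv K 7 3 * Bv K 7 5,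
          Av K 7 1 * Av K 7 3 * Av K 7 6 * Bv K 7 1 * Bv K 7 3 * Bv K 7 6} :
          Set (MvPolynomial (Fin 7 ⊕ Fin 7) K)) :
        Subalgebra K (MvPolynomial (Fin 7 ⊕ Fin 7) K)) : Set (MvPolynomial (Fin 7 ⊕ Fin 7) K)) =
      ↑(controlSpan K 7
        (fun u v => u 1 + u 2 = v 3 + v 4 ∧ u 2 + u 3 = v 2 + v 3 ∧
          u 3 + u 4 = v 1 + v 2 ∧ u 4 + u 5 = v 6 + v 7 ∧
          u 5 + u 6 = v 5 + v 6 ∧ u 6 + u 7 = v 4 + v 5)) := by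

  constructor
  · intro p hp
    exact Submodule.subset_span (Stmt18Aux.gsub K hp)
  · have h1 : (Algebra.adjoin K (Stmt18Aux.GSet K) : Set (MvPolynomial (Fin 7 ⊕ Fin 7) K))
        = (Submodule.span K
            ((Submonoid.closure (Stmt18Aux.GSet K) : Submonoid (MvPolynomial (Fin 7 ⊕ Fin 7) K))
              : Set (MvPolynomial (Fin 7 ⊕ Fin 7) K))
          : Set (MvPolynomial (Fin 7 ⊕ Fin 7) K)) := by
      rw [← Algebra.adjoin_eq_span]; rfl
    show (Algebra.adjoin K (Stmt18Aux.GSet K) : Set (MvPolynomial (Fin 7 ⊕ Fin 7) K)) = _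
    rw [h1, Stmt18Aux.closure_eq]
    rfl
end
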